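/- arXiv:2511.01931 — 2 statements merged into one kernel-verified Lean document; each statement's English description precedes it below -/
import Mathlib

section
/- Let F be a perfect field of characteristic p > 0 and (L, [p]) a finite-dimensional restricted Lie algebra over F. Then every x ∈ L has a unique decomposition x = x_s + x_n with x_s semisimple, x_n p-nilpotent, and [x_s, x_n] = 0. -/
open scoped TensorProduct

/-- Iterated adjoint action: `adIter z n w = (ad z)^n w`. -/
def adIter {L : Type*} [LieRing L] (z : L) : ℕ → L → L
  | 0, w => w
  | n+1, w => ⁅z, adIter z n w⁆

/-- A `p`-semilinear map between `F`-vector spaces. -/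
def IsPSemilinear (p : ℕ) (F : Type*) [Field F] {V W : Type*}
    [AddCommGroup V] [Module F V] [AddCommGroup W] [Module F W] (f : V → W) : Prop :=
  ∀ (a : F) (x y : V), f (a • x + y) = a ^ p • f x + f y

/-- `pm` is a `p`-mapping on the Lie algebra `L` over `F`. -/
structure IsPMap (p : ℕ) (F : Type*) [Field F] (L : Type*) [LieRing L] [LieAlgebra F L]
    (pm : L → L) : Prop where
  ad_pow : ∀ a x : L, ⁅pm a, x⁆ = adIter a p x
  smul_pow : ∀ (c : F) (a : L), pm (c • a) = c ^ p • pm a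
  add_pow : ∀ a b : L, ∃ s : Fin (p - 1) → L,
    adIter ((Polynomial.X : Polynomial F) ⊗ₜ[F] a + (1 : Polynomial F) ⊗ₜ[F] b) (p - 1)
        ((1 : Polynomial F) ⊗ₜ[F] a)
      = (∑ j : Fin (p - 1), ((j : ℕ) + 1) •
          (((Polynomial.X : Polynomial F) ^ (j : ℕ)) ⊗ₜ[F] s j)) ∧
    pm (a + b) = pm a + pm b + ∑ j : Fin (p - 1), s j

/-- `H` is a `p`-subalgebra w.r.t. the map `pm`. -/
def IsPSubalgebra (F : Type*) [Field F] {L : Type*} [LieRing L] [LieAlgebra F L]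
    (pm : L → L) (H : LieSubalgebra F L) : Prop :=
  ∀ x ∈ H, pm x ∈ H

/-- The `p`-subalgebra generated by a set `S`. -/
def pSpan (F : Type*) [Field F] {L : Type*} [LieRing L] [LieAlgebra F L]
    (pm : L → L) (S : Set L) : LieSubalgebra F L :=
  sInf {H : LieSubalgebra F L | IsPSubalgebra F pm H ∧ S ⊆ H}

/-- An element `x` is semisimple if it lies in the `p`-subalgebra generated by `pm x`. -/
def IsSemisimpleElt (F : Type*) [Field F] {L : Type*} [LieRing L] [LieAlgebra F L]
    (pm : L → L) (x : L) : Prop :=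
  x ∈ pSpan F pm {pm x}

/-- An element is `p`-nilpotent if some iterate of the `p`-map kills it. -/
def IsPNilpotentElt {L : Type*} (pm : L → L) [Zero L] (x : L) : Prop :=
  ∃ n : ℕ, pm^[n] x = 0

set_option linter.unusedSectionVars false

section JCAux

variable {p : ℕ} [Fact p.Prime] {F : Type*} [Field F] [CharP F p] [PerfectRing F p]
  {L : Type*} [LieRing L] [LieAlgebra F L] {pm : L → L}

lemma adIter_succ_right (z w : L) (n : ℕ) : adIter z (n+1) w = adIter z n ⁅z, w⁆ := by
  induction n generalizing w with
  | zero => rfl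
  | succ n ih => show ⁅z, adIter z (n+1) w⁆ = _; rw [ih]; rfl

lemma adIter_zero (z : L) (n : ℕ) : adIter z n (0:L) = 0 := by
  induction n with
  | zero => rfl
  | succ n ih => show ⁅z, adIter z n 0⁆ = 0; rw [ih, lie_zero]

lemma pm_bracket_left (hpm : IsPMap p F L pm) {a b : L} (h : ⁅a,b⁆ = 0) : ⁅pm a, b⁆ = 0 := by
  obtain ⟨m, hm⟩ : ∃ m, p = m + 1 :=
    ⟨p - 1, (Nat.succ_pred_eq_of_pos (Fact.out : p.Prime).pos).symm⟩
  rw [hpm.ad_pow, hm, adIter_succ_right, h, adIter_zero]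

lemma pm_bracket_right (hpm : IsPMap p F L pm) {a b : L} (h : ⁅a,b⁆ = 0) : ⁅a, pm b⁆ = 0 := by
  rw [← lie_skew, pm_bracket_left hpm (by rw [← lie_skew, h, neg_zero]), neg_zero]

lemma pm_iter_bracket (hpm : IsPMap p F L pm) {a b : L} (h : ⁅a,b⁆ = 0) (i j : ℕ) :
    ⁅pm^[i] a, pm^[j] b⁆ = 0 := by
  induction i generalizing j with
  | zero =>
    induction j with
    | zero => exact h
    | succ j ihj => rw [Function.iterate_succ_apply']; exact pm_bracket_right hpm ihj
  | succ i ihi =>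
    rw [Function.iterate_succ_apply']; exact pm_bracket_left hpm (ihi j)

lemma pm_zero (hpm : IsPMap p F L pm) : pm 0 = 0 := by
  have := hpm.smul_pow 0 0
  rwa [zero_smul, zero_pow (Fact.out : p.Prime).ne_zero, zero_smul] at this

lemma pm_neg (hpm : IsPMap p F L pm) (a : L) : pm (-a) = - pm a := by
  have := hpm.smul_pow (-1) a
  rwa [neg_one_smul, neg_one_pow_char F, neg_one_smul] at this

lemma pm_iter_zero (hpm : IsPMap p F L pm) (k : ℕ) : pm^[k] (0:L) = 0 := by
  induction k with
  | zero => rfl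
  | succ k ih => rw [Function.iterate_succ_apply', ih, pm_zero hpm]

lemma pm_iter_neg (hpm : IsPMap p F L pm) (a : L) (k : ℕ) : pm^[k] (-a) = - pm^[k] a := by
  induction k with
  | zero => rfl
  | succ k ih => rw [Function.iterate_succ_apply', ih, pm_neg hpm, Function.iterate_succ_apply']

lemma pm_iter_smul (hpm : IsPMap p F L pm) (c : F) (a : L) (k : ℕ) :
    pm^[k] (c • a) = c ^ (p ^ k) • pm^[k] a := by
  induction k with
  | zero => simp
  | succ k ih =>
    rw [Function.iterate_succ_apply', ih, hpm.smul_pow, Function.iterate_succ_apply',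
      ← pow_mul, pow_succ]

lemma pm_add_comm (hpm : IsPMap p F L pm) {a b : L} (h : ⁅a,b⁆ = 0) :
    pm (a + b) = pm a + pm b := by
  obtain ⟨s, hs1, hs2⟩ := hpm.add_pow a b
  have hp2 : 2 ≤ p := (Fact.out : p.Prime).two_le
  obtain ⟨m, hm⟩ : ∃ m, p - 1 = m + 1 := ⟨p - 2, by omega⟩
  have hz : ⁅((Polynomial.X : Polynomial F) ⊗ₜ[F] a + (1 : Polynomial F) ⊗ₜ[F] b),
      ((1 : Polynomial F) ⊗ₜ[F] a)⁆ = 0 := by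
    have key : ∀ z w : Polynomial F ⊗[F] L,
        ⁅z, w⁆ = @Bracket.bracket _ _ (LieRingModule.toBracket) z w := fun _ _ => rfl
    rw [key, add_lie]
    have e1 : @Bracket.bracket _ _ (LieRingModule.toBracket)
        ((Polynomial.X : Polynomial F) ⊗ₜ[F] a) ((1 : Polynomial F) ⊗ₜ[F] a)
        = (Polynomial.X * 1) ⊗ₜ[F] ⁅a, a⁆ := rfl
    have e2 : @Bracket.bracket _ _ (LieRingModule.toBracket)
        ((1 : Polynomial F) ⊗ₜ[F] b) ((1 : Polynomial F) ⊗ₜ[F] a)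
        = (1 * 1 : Polynomial F) ⊗ₜ[F] ⁅b, a⁆ := rfl
    rw [e1, e2, lie_self, (by rw [← lie_skew, h, neg_zero] : ⁅b,a⁆ = (0:L))]
    simp
  rw [show adIter ((Polynomial.X : Polynomial F) ⊗ₜ[F] a + (1 : Polynomial F) ⊗ₜ[F] b) (p - 1)
        ((1 : Polynomial F) ⊗ₜ[F] a) = 0 from by
      rw [hm, adIter_succ_right, hz, adIter_zero]] at hs1
  have hs0 : ∀ j, s j = 0 := by
    intro j
    set φ : Polynomial F ⊗[F] L →ₗ[F] L :=
      (TensorProduct.lid F L).toLinearMap ∘ₗ LinearMap.rTensor L (Polynomial.lcoeff F (j:ℕ)) with hφ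
    have h0 := congrArg φ hs1
    rw [map_zero, map_sum] at h0
    have hterm : ∀ i : Fin (p-1), φ (((i : ℕ) + 1) •
        (((Polynomial.X : Polynomial F) ^ (i : ℕ)) ⊗ₜ[F] s i))
        = ((i : ℕ) + 1) • (if (j:ℕ) = (i:ℕ) then s i else 0) := by
      intro i
      rw [map_nsmul, hφ]
      simp only [LinearMap.coe_comp, Function.comp_apply, LinearMap.rTensor_tmul,
        Polynomial.lcoeff_apply, Polynomial.coeff_X_pow, LinearEquiv.coe_coe]
      split_ifs <;> simp
    rw [Finset.sum_congr rfl (fun i _ => hterm i)] at h0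
    rw [Finset.sum_eq_single j
      (by intro i _ hij; rw [if_neg (fun hc => hij (Fin.ext hc.symm))]; simp)
      (by intro hj; exact absurd (Finset.mem_univ j) hj)] at h0
    rw [if_pos rfl] at h0
    have h1 : (((j:ℕ) + 1 : ℕ) : F) • s j = 0 := by
      rw [Nat.cast_smul_eq_nsmul]; exact h0.symm
    rcases smul_eq_zero.mp h1 with hc | hc
    · exfalso
      have hdvd := (CharP.cast_eq_zero_iff F p _).mp hc
      have hj := j.2
      have := Nat.le_of_dvd (Nat.succ_pos _) hdvd
      omega
    · exact hc
  rw [hs2, Finset.sum_congr rfl (fun j _ => hs0 j), Finset.sum_const_zero, add_zero]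

lemma pm_sub_comm (hpm : IsPMap p F L pm) {a b : L} (h : ⁅a,b⁆ = 0) :
    pm (a - b) = pm a - pm b := by
  rw [sub_eq_add_neg, pm_add_comm hpm (by rw [lie_neg, h, neg_zero]), pm_neg hpm,
    ← sub_eq_add_neg]

lemma pm_iter_add_comm (hpm : IsPMap p F L pm) {a b : L} (h : ⁅a,b⁆ = 0) (k : ℕ) :
    pm^[k] (a + b) = pm^[k] a + pm^[k] b := by
  induction k with
  | zero => rfl
  | succ k ih =>
    rw [Function.iterate_succ_apply', ih,
      pm_add_comm hpm (pm_iter_bracket hpm h k k),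
      Function.iterate_succ_apply', Function.iterate_succ_apply']

lemma pm_iter_sub_comm (hpm : IsPMap p F L pm) {a b : L} (h : ⁅a,b⁆ = 0) (k : ℕ) :
    pm^[k] (a - b) = pm^[k] a - pm^[k] b := by
  rw [sub_eq_add_neg, pm_iter_add_comm hpm (by rw [lie_neg, h, neg_zero]), pm_iter_neg hpm,
    ← sub_eq_add_neg]

/-- Span of a pairwise-commuting set is abelian. -/
lemma span_abelian {S : Set L} (hS : ∀ a ∈ S, ∀ b ∈ S, ⁅a,b⁆ = (0:L)) :
    ∀ a ∈ Submodule.span F S, ∀ b ∈ Submodule.span F S, ⁅a,b⁆ = (0:L) := by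
  intro a ha b hb
  induction ha using Submodule.span_induction with
  | mem u hu =>
    induction hb using Submodule.span_induction with
    | mem v hv => exact hS u hu v hv
    | zero => exact lie_zero u
    | add v w _ _ ihv ihw => rw [lie_add, ihv, ihw, add_zero]
    | smul c v _ ihv => rw [lie_smul, ihv, smul_zero]
  | zero => exact zero_lie b
  | add u v _ _ ihu ihv => rw [add_lie, ihu, ihv, add_zero]
  | smul c u _ ihu => rw [smul_lie, ihu, smul_zero]

lemma pm_mem_span_of_comm (hpm : IsPMap p F L pm) {S : Set L}
    (hS : ∀ a ∈ S, ∀ b ∈ S, ⁅a,b⁆ = (0:L)) {a : L} (ha : a ∈ Submodule.span F S) :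
    pm a ∈ Submodule.span F (pm '' S) := by
  induction ha using Submodule.span_induction with
  | mem u hu => exact Submodule.subset_span ⟨u, hu, rfl⟩
  | zero => rw [pm_zero hpm]; exact Submodule.zero_mem _
  | add u v hu hv ihu ihv =>
    rw [pm_add_comm hpm (span_abelian hS u hu v hv)]
    exact Submodule.add_mem _ ihu ihv
  | smul c u hu ihu =>
    rw [hpm.smul_pow]
    exact Submodule.smul_mem _ _ ihu

/-- Submodule spanned by the `pm`-image of a submodule. -/
def pIm (F : Type*) [Field F] {L : Type*} [LieRing L] [LieAlgebra F L] (pm : L → L)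
    (W : Submodule F L) : Submodule F L :=
  Submodule.span F (pm '' W)

lemma pIm_mono {W W' : Submodule F L} (h : W ≤ W') : pIm F pm W ≤ pIm F pm W' :=
  Submodule.span_mono (Set.image_mono h)

lemma pIm_le {C : Submodule F L} (hstab : ∀ a ∈ C, pm a ∈ C) : pIm F pm C ≤ C := by
  rw [pIm, Submodule.span_le]
  rintro y ⟨a, ha, rfl⟩
  exact hstab a ha

lemma exists_pm_eq (hpm : IsPMap p F L pm) {C : Submodule F L}
    (habel : ∀ a ∈ C, ∀ b ∈ C, ⁅a,b⁆ = (0:L)) {b : L} (hb : b ∈ pIm F pm C) :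
    ∃ a ∈ C, pm a = b := by
  induction hb using Submodule.span_induction with
  | mem u hu => obtain ⟨a, ha, rfl⟩ := hu; exact ⟨a, ha, rfl⟩
  | zero => exact ⟨0, C.zero_mem, pm_zero hpm⟩
  | add u v hu hv ihu ihv =>
    obtain ⟨a, ha, rfl⟩ := ihu
    obtain ⟨a', ha', rfl⟩ := ihv
    exact ⟨a + a', C.add_mem ha ha', pm_add_comm hpm (habel a ha a' ha')⟩
  | smul c u hu ihu =>
    obtain ⟨a, ha, rfl⟩ := ihu
    refine ⟨(frobeniusEquiv F p).symm c • a, C.smul_mem _ ha, ?_⟩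
    rw [hpm.smul_pow]
    congr 1
    have := (frobeniusEquiv F p).apply_symm_apply c
    rwa [coe_frobeniusEquiv, frobenius_def] at this

lemma exists_pm_iter_eq (hpm : IsPMap p F L pm) {C : Submodule F L}
    (habel : ∀ a ∈ C, ∀ b ∈ C, ⁅a,b⁆ = (0:L)) (hstab : ∀ a ∈ C, pm a ∈ C)
    (hsurj : ∀ b ∈ C, ∃ a ∈ C, pm a = b) (k : ℕ) :
    ∀ b ∈ C, ∃ a ∈ C, pm^[k] a = b := by
  induction k with
  | zero => exact fun b hb => ⟨b, hb, rfl⟩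
  | succ k ih =>
    intro b hb
    obtain ⟨a, ha, rfl⟩ := ih b hb
    obtain ⟨a', ha', rfl⟩ := hsurj a ha
    exact ⟨a', ha', by rw [Function.iterate_succ_apply]⟩

lemma pm_iter_mem {C : Submodule F L} (hstab : ∀ a ∈ C, pm a ∈ C) {a : L} (ha : a ∈ C) (k : ℕ) :
    pm^[k] a ∈ C := by
  induction k with
  | zero => exact ha
  | succ k ih => rw [Function.iterate_succ_apply']; exact hstab _ ih

lemma pm_inj [FiniteDimensional F L] (hpm : IsPMap p F L pm) {C : Submodule F L}
    (habel : ∀ a ∈ C, ∀ b ∈ C, ⁅a,b⁆ = (0:L)) (hstab : ∀ a ∈ C, pm a ∈ C)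
    (hsurj : ∀ b ∈ C, ∃ a ∈ C, pm a = b) :
    ∀ u ∈ C, pm u = 0 → u = 0 := by
  intro u huC hu0
  by_contra hune
  set K : ℕ → Submodule F L := fun k =>
    { carrier := {a | a ∈ C ∧ pm^[k] a = 0}
      add_mem' := fun {x y} hx hy => ⟨C.add_mem hx.1 hy.1, by
        rw [pm_iter_add_comm hpm (habel _ hx.1 _ hy.1), hx.2, hy.2, add_zero]⟩
      zero_mem' := ⟨C.zero_mem, pm_iter_zero hpm k⟩
      smul_mem' := fun c x hx => ⟨C.smul_mem c hx.1, by
        rw [pm_iter_smul hpm, hx.2, smul_zero]⟩ } with hK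
  have hKlt : ∀ k, K k < K (k+1) := by
    intro k
    obtain ⟨w, hwC, hw⟩ := exists_pm_iter_eq hpm habel hstab hsurj k u huC
    refine lt_of_le_of_ne ?_ (fun heq => ?_)
    · rintro a ⟨haC, ha⟩
      exact ⟨haC, by rw [Function.iterate_succ_apply', ha, pm_zero hpm]⟩
    · have hw1 : w ∈ K (k+1) := ⟨hwC, by rw [Function.iterate_succ_apply', hw, hu0]⟩
      rw [← heq] at hw1
      exact hune (by rw [← hw]; exact hw1.2)
  have hrank : ∀ k, k ≤ Module.finrank F (K k) := by
    intro k
    induction k with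
    | zero => exact Nat.zero_le _
    | succ k ih =>
      have := Submodule.finrank_lt_finrank_of_lt (hKlt k)
      omega
  have h1 := hrank (Module.finrank F L + 1)
  have h2 := Submodule.finrank_le (K (Module.finrank F L + 1))
  omega

lemma chain_stab [FiniteDimensional F L] (f : ℕ → Submodule F L)
    (hf : ∀ k, f (k+1) ≤ f k) : ∃ N, f (N+1) = f N := by
  by_contra hcon
  push_neg at hcon
  have hlt : ∀ k, Module.finrank F (f (k+1)) < Module.finrank F (f k) := fun k =>
    Submodule.finrank_lt_finrank_of_lt (lt_of_le_of_ne (hf k) (hcon k))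
  have hdec : ∀ k, Module.finrank F (f k) + k ≤ Module.finrank F (f 0) := by
    intro k
    induction k with
    | zero => omega
    | succ k ih => have := hlt k; omega
  have := hdec (Module.finrank F (f 0) + 1)
  omega

lemma mem_pSpan_of_forall {T : Set L} {y : L}
    (h : ∀ H : LieSubalgebra F L, IsPSubalgebra F pm H → T ⊆ ↑H → y ∈ H) :
    y ∈ pSpan F pm T := by
  rw [← LieSubalgebra.mem_coe, pSpan, LieSubalgebra.coe_sInf]
  simp only [Set.mem_iInter]
  intro H hH
  exact h H hH.1 hH.2

lemma forall_of_mem_pSpan {T : Set L} {y : L} (hy : y ∈ pSpan F pm T)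
    (H : LieSubalgebra F L) (h1 : IsPSubalgebra F pm H) (h2 : T ⊆ ↑H) : y ∈ H := by
  rw [← LieSubalgebra.mem_coe, pSpan, LieSubalgebra.coe_sInf] at hy
  simp only [Set.mem_iInter] at hy
  exact hy H ⟨h1, h2⟩

lemma semisimple_mem_span (hpm : IsPMap p F L pm) {y : L} (hy : IsSemisimpleElt F pm y) :
    y ∈ Submodule.span F (Set.range fun j => pm^[j+1] y) := by
  set W := Submodule.span F (Set.range fun j => pm^[j+1] y) with hW
  have hgen : ∀ a ∈ (Set.range fun j => pm^[j+1] y), ∀ b ∈ (Set.range fun j => pm^[j+1] y),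
      ⁅a,b⁆ = (0:L) := by
    rintro a ⟨i, rfl⟩ b ⟨j, rfl⟩
    exact pm_iter_bracket hpm (lie_self y) (i+1) (j+1)
  have habel := span_abelian (F := F) hgen
  have hlie : ∀ {a b : L}, a ∈ W → b ∈ W → ⁅a, b⁆ ∈ W := by
    intro a b ha hb
    rw [habel a ha b hb]
    exact W.zero_mem
  set H : LieSubalgebra F L := ⟨W, hlie⟩ with hH
  have hmem : ∀ z : L, z ∈ H ↔ z ∈ W := fun z => Iff.rfl
  have hps : IsPSubalgebra F pm H := by
    intro z hz
    rw [hmem] at hz ⊢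
    refine Submodule.span_le.mpr ?_ (pm_mem_span_of_comm hpm hgen hz)
    rintro w ⟨u, ⟨i, rfl⟩, rfl⟩
    refine Submodule.subset_span ⟨i+1, ?_⟩
    show pm^[i+1+1] y = pm (pm^[i+1] y)
    rw [Function.iterate_succ_apply']
  have hpmy : pm y ∈ H := (hmem _).mpr (Submodule.subset_span ⟨0, rfl⟩)
  exact (hmem y).mp (forall_of_mem_pSpan hy H hps (Set.singleton_subset_iff.mpr hpmy))

lemma semisimple_of_surj [FiniteDimensional F L] (hpm : IsPMap p F L pm) {C : Submodule F L}
    (habel : ∀ a ∈ C, ∀ b ∈ C, ⁅a,b⁆ = (0:L)) (hstab : ∀ a ∈ C, pm a ∈ C)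
    (hsurj : ∀ b ∈ C, ∃ a ∈ C, pm a = b) {c : L} (hc : c ∈ C) :
    IsSemisimpleElt F pm c := by
  set W : ℕ → Submodule F L := fun k => Submodule.span F (Set.range fun j => pm^[j+k] c) with hWdef
  have hgen : ∀ k, ∀ a ∈ (Set.range fun j => pm^[j+k] c), ∀ b ∈ (Set.range fun j => pm^[j+k] c),
      ⁅a,b⁆ = (0:L) := by
    rintro k a ⟨i, rfl⟩ b ⟨j, rfl⟩
    exact pm_iter_bracket hpm (lie_self c) (i+k) (j+k)
  have hWsub : ∀ k, W k ≤ C := by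
    intro k
    rw [hWdef, Submodule.span_le]
    rintro a ⟨j, rfl⟩
    exact pm_iter_mem hstab hc (j+k)
  have hWP : ∀ k, pIm F pm (W k) = W (k+1) := by
    intro k
    apply le_antisymm
    · rw [pIm, Submodule.span_le]
      rintro b ⟨a, ha, rfl⟩
      exact Submodule.span_le.mpr (by
        rintro w ⟨u, ⟨i, rfl⟩, rfl⟩
        refine Submodule.subset_span ⟨i, ?_⟩
        show pm^[i+(k+1)] c = pm (pm^[i+k] c)
        rw [show i+(k+1) = (i+k)+1 by omega, Function.iterate_succ_apply'])
        (pm_mem_span_of_comm hpm (hgen k) ha)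
    · rw [hWdef, Submodule.span_le]
      rintro b ⟨j, rfl⟩
      have heq2 : pm^[j+(k+1)] c = pm (pm^[j+k] c) := by
        rw [show j+(k+1) = (j+k)+1 by omega, Function.iterate_succ_apply']
      show pm^[j+(k+1)] c ∈ pIm F pm (W k)
      rw [heq2]
      exact Submodule.subset_span ⟨pm^[j+k] c, Submodule.subset_span ⟨j, rfl⟩, rfl⟩
  have hWmono : ∀ k, W (k+1) ≤ W k := by
    intro k
    rw [hWdef, Submodule.span_le]
    rintro b ⟨j, rfl⟩
    refine Submodule.subset_span ⟨j+1, ?_⟩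
    show pm^[j+1+k] c = pm^[j+(k+1)] c
    rw [show j+1+k = j+(k+1) by omega]
  obtain ⟨M, hM⟩ := chain_stab W hWmono
  have hinj := pm_inj hpm habel hstab hsurj
  have hstep : ∀ j, W (j+1) = W (j+2) → W j = W (j+1) := by
    intro j hj
    refine le_antisymm ?_ (hWmono j)
    intro a ha
    have haC : a ∈ C := hWsub j ha
    have hpa : pm a ∈ pIm F pm (W j) := Submodule.subset_span ⟨a, ha, rfl⟩
    rw [hWP j, hj, ← hWP (j+1)] at hpa
    obtain ⟨b, hbW, hb⟩ := exists_pm_eq hpm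
      (fun u hu v hv => habel u (hWsub (j+1) hu) v (hWsub (j+1) hv)) hpa
    have hbC : b ∈ C := hWsub (j+1) hbW
    have : pm (a - b) = 0 := by rw [pm_sub_comm hpm (habel a haC b hbC), hb, sub_self]
    have hab : a = b := by
      have := hinj (a - b) (C.sub_mem haC hbC) this
      rwa [sub_eq_zero] at this
    rw [hab]; exact hbW
  have hdown : ∀ i, W (M - i) = W (M - i + 1) := by
    intro i
    induction i with
    | zero => simpa using hM.symm
    | succ i ih =>
      by_cases hcase : M ≤ i
      · rw [show M - (i+1) = M - i by omega]; exact ih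
      · have harith : M - i = (M - (i+1)) + 1 := by omega
        refine hstep (M - (i+1)) ?_
        rw [show M - (i+1) + 1 = M - i from harith.symm,
          show M - (i+1) + 2 = M - i + 1 by omega]
        exact ih
  have hW01 : W 0 = W 1 := by
    have := hdown M
    rwa [Nat.sub_self] at this
  have hcW1 : c ∈ W 1 := by
    rw [← hW01]
    exact Submodule.subset_span ⟨0, rfl⟩
  refine mem_pSpan_of_forall ?_
  intro H hH hsubH
  have hHgen : ∀ j : ℕ, pm^[j+1] c ∈ H := by
    intro j
    induction j with
    | zero => exact hsubH rfl
    | succ j ih =>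
      rw [show j+1+1 = (j+1)+1 from rfl, Function.iterate_succ_apply']
      exact hH _ ih
  have : W 1 ≤ H.toSubmodule := by
    rw [hWdef, Submodule.span_le]
    rintro b ⟨j, rfl⟩
    exact (LieSubalgebra.mem_toSubmodule (L' := H)).mpr (hHgen j)
  exact (LieSubalgebra.mem_toSubmodule (L' := H)).mp (this hcW1)

lemma centralizes_span {S : Set L} {y : L} (h : ∀ g ∈ S, ⁅y, g⁆ = (0:L)) :
    ∀ a ∈ Submodule.span F S, ⁅y, a⁆ = (0:L) := by
  intro a ha
  induction ha using Submodule.span_induction with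
  | mem u hu => exact h u hu
  | zero => exact lie_zero y
  | add u v _ _ ihu ihv => rw [lie_add, ihu, ihv, add_zero]
  | smul c u _ ihu => rw [lie_smul, ihu, smul_zero]

lemma pm_iter_eq_zero_of_le (hpm : IsPMap p F L pm) {a : L} {m k : ℕ} (h : pm^[m] a = 0)
    (hmk : m ≤ k) : pm^[k] a = 0 := by
  rw [show k = (k - m) + m by omega, Function.iterate_add_apply, h, pm_iter_zero hpm]

end JCAux

/-- **Jordan–Chevalley decomposition.** Over a perfect field of characteristic
`p > 0`, every element of a finite-dimensional restricted Lie algebra has a unique decomposition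
`x = x_s + x_n` with `x_s` semisimple, `x_n` `p`-nilpotent and `⁅x_s, x_n⁆ = 0`. -/
theorem exists_unique_jordan_chevalley (p : ℕ) [Fact p.Prime]
    (F : Type*) [Field F] [CharP F p] [PerfectRing F p]
    {L : Type*} [LieRing L] [LieAlgebra F L] [FiniteDimensional F L]
    (pm : L → L) (hpm : IsPMap p F L pm) (x : L) :
    ∃! q : L × L, IsSemisimpleElt F pm q.1 ∧ IsPNilpotentElt pm q.2 ∧
      ⁅q.1, q.2⁆ = 0 ∧ x = q.1 + q.2 := by
  classical
  -- the p-envelope of x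
  set S0 : Set L := Set.range fun k => pm^[k] x with hS0
  set A : Submodule F L := Submodule.span F S0 with hA
  have hgenA : ∀ g ∈ S0, ∀ g' ∈ S0, ⁅g, g'⁆ = (0:L) := by
    rintro g ⟨i, rfl⟩ g' ⟨j, rfl⟩
    exact pm_iter_bracket hpm (lie_self x) i j
  have habelA : ∀ a ∈ A, ∀ b ∈ A, ⁅a,b⁆ = (0:L) := span_abelian hgenA
  have hstabA : ∀ a ∈ A, pm a ∈ A := by
    intro a ha
    refine Submodule.span_le.mpr ?_ (pm_mem_span_of_comm hpm hgenA ha)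
    rintro w ⟨u, ⟨i, rfl⟩, rfl⟩
    refine Submodule.subset_span ⟨i+1, ?_⟩
    show pm^[i+1] x = pm (pm^[i] x)
    rw [Function.iterate_succ_apply']
  have hxA : x ∈ A := Submodule.subset_span ⟨0, rfl⟩
  -- the stable image
  set V : ℕ → Submodule F L := fun k => (pIm F pm)^[k] A with hV
  have hVsucc : ∀ k, V (k+1) = pIm F pm (V k) := fun k => Function.iterate_succ_apply' _ _ _
  have hVsub : ∀ k, V k ≤ A := by
    intro k
    induction k with
    | zero => exact le_refl A
    | succ k ih => rw [hVsucc]; exact le_trans (pIm_mono ih) (pIm_le hstabA)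
  have hVmono : ∀ k, V (k+1) ≤ V k := by
    intro k
    induction k with
    | zero => rw [hVsucc]; exact pIm_le hstabA
    | succ k ih =>
      rw [hVsucc (k+1)]
      exact le_trans (pIm_mono ih) (le_of_eq (hVsucc k).symm)
  obtain ⟨N, hN⟩ := chain_stab V hVmono
  have habelV : ∀ a ∈ V N, ∀ b ∈ V N, ⁅a,b⁆ = (0:L) :=
    fun a ha b hb => habelA a (hVsub N ha) b (hVsub N hb)
  have hstabV : ∀ a ∈ V N, pm a ∈ V N := by
    intro a ha
    have : pm a ∈ pIm F pm (V N) := Submodule.subset_span ⟨a, ha, rfl⟩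
    rwa [← hVsucc, hN] at this
  have hVsurj : ∀ b ∈ V N, ∃ a ∈ V N, pm a = b := by
    intro b hb
    rw [← hN, hVsucc] at hb
    exact exists_pm_eq hpm habelV hb
  -- decompose x
  have hxk : ∀ k, pm^[k] x ∈ V k := by
    intro k
    induction k with
    | zero => exact hxA
    | succ k ih =>
      rw [hVsucc, Function.iterate_succ_apply']
      exact Submodule.subset_span ⟨pm^[k] x, ih, rfl⟩
  obtain ⟨v, hvV, hv⟩ := exists_pm_iter_eq hpm habelV hstabV hVsurj N (pm^[N] x) (hxk N)
  have hvA : v ∈ A := hVsub N hvV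
  set n : L := x - v with hn
  have hnA : n ∈ A := A.sub_mem hxA hvA
  have hnzero : pm^[N] n = 0 := by
    rw [hn, pm_iter_sub_comm hpm (habelA x hxA v hvA), hv, sub_self]
  have hvss : IsSemisimpleElt F pm v := semisimple_of_surj hpm habelV hstabV hVsurj hvV
  refine ⟨(v, n), ⟨hvss, ⟨N, hnzero⟩, habelA v hvA n hnA, by
    show x = v + n
    rw [hn]
    exact (add_sub_cancel v x).symm⟩, ?_⟩
  rintro ⟨s', n'⟩ ⟨hs'ss, hn'nil, hcomm', hsum'⟩
  simp only at hs'ss hn'nil hcomm' hsum'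
  -- s' and n' centralize A
  have hs'x : ⁅s', x⁆ = 0 := by rw [hsum', lie_add, lie_self, hcomm', zero_add]
  have hn'x : ⁅n', x⁆ = 0 := by
    rw [hsum', lie_add, lie_self, ← lie_skew, hcomm', neg_zero, add_zero]
  have hcentral : ∀ y : L, ⁅y, x⁆ = 0 → ∀ a ∈ A, ⁅y, a⁆ = 0 := by
    intro y hyx
    refine centralizes_span ?_
    rintro g ⟨k, rfl⟩
    exact pm_iter_bracket hpm hyx 0 k
  have hs'v : ⁅s', v⁆ = 0 := hcentral s' hs'x v hvA
  have hn'n : ⁅n', n⁆ = 0 := hcentral n' hn'x n hnA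
  -- the difference d
  set d : L := v - s' with hd
  have hd2 : d = n' - n := by
    rw [hd, hn]
    have : x = s' + n' := hsum'
    rw [this]; abel
  -- d is p-nilpotent
  obtain ⟨m', hm'⟩ := hn'nil
  have hdnil : pm^[max m' N] d = 0 := by
    rw [hd2, pm_iter_sub_comm hpm hn'n,
      pm_iter_eq_zero_of_le hpm hm' (le_max_left m' N),
      pm_iter_eq_zero_of_le hpm hnzero (le_max_right m' N), sub_self]
  -- d is semisimple : use the joint envelope C of v and s'
  have hvs' : ⁅v, s'⁆ = 0 := by rw [← lie_skew, hs'v, neg_zero]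
  set SC : Set L := (Set.range fun j => pm^[j] v) ∪ (Set.range fun j => pm^[j] s') with hSC
  set C : Submodule F L := Submodule.span F SC with hC
  have hgenC : ∀ g ∈ SC, ∀ g' ∈ SC, ⁅g, g'⁆ = (0:L) := by
    rintro g (⟨i, rfl⟩ | ⟨i, rfl⟩) g' (⟨j, rfl⟩ | ⟨j, rfl⟩)
    · exact pm_iter_bracket hpm (lie_self v) i j
    · exact pm_iter_bracket hpm hvs' i j
    · exact pm_iter_bracket hpm (by rw [← lie_skew, hvs', neg_zero]) i j
    · exact pm_iter_bracket hpm (lie_self s') i j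
  have habelC : ∀ a ∈ C, ∀ b ∈ C, ⁅a,b⁆ = (0:L) := span_abelian hgenC
  have hstabC : ∀ a ∈ C, pm a ∈ C := by
    intro a ha
    refine Submodule.span_le.mpr ?_ (pm_mem_span_of_comm hpm hgenC ha)
    rintro w ⟨u, (⟨i, rfl⟩ | ⟨i, rfl⟩), rfl⟩
    · refine Submodule.subset_span (Or.inl ⟨i+1, ?_⟩)
      show pm^[i+1] v = pm (pm^[i] v)
      rw [Function.iterate_succ_apply']
    · refine Submodule.subset_span (Or.inr ⟨i+1, ?_⟩)
      show pm^[i+1] s' = pm (pm^[i] s')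
      rw [Function.iterate_succ_apply']
  have hvC : v ∈ C := Submodule.subset_span (Or.inl ⟨0, rfl⟩)
  have hs'C : s' ∈ C := Submodule.subset_span (Or.inr ⟨0, rfl⟩)
  -- C is contained in its own pm-image
  have hsemimem : ∀ y : L, IsSemisimpleElt F pm y →
      (∀ j : ℕ, pm^[j] y ∈ C) → y ∈ pIm F pm C := by
    intro y hyss hyC
    have := semisimple_mem_span hpm hyss
    refine Submodule.span_le.mpr ?_ this
    rintro w ⟨j, rfl⟩
    show pm^[j+1] y ∈ pIm F pm C
    rw [Function.iterate_succ_apply']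
    exact Submodule.subset_span ⟨pm^[j] y, hyC j, rfl⟩
  have hCP : C ≤ pIm F pm C := by
    rw [hC, Submodule.span_le]
    rintro g (⟨i, rfl⟩ | ⟨i, rfl⟩)
    · match i with
      | 0 => exact hsemimem v hvss (fun j => Submodule.subset_span (Or.inl ⟨j, rfl⟩))
      | (i+1) =>
        show pm^[i+1] v ∈ pIm F pm C
        rw [Function.iterate_succ_apply']
        exact Submodule.subset_span ⟨pm^[i] v, Submodule.subset_span (Or.inl ⟨i, rfl⟩), rfl⟩
    · match i with
      | 0 => exact hsemimem s' hs'ss (fun j => Submodule.subset_span (Or.inr ⟨j, rfl⟩))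
      | (i+1) =>
        show pm^[i+1] s' ∈ pIm F pm C
        rw [Function.iterate_succ_apply']
        exact Submodule.subset_span ⟨pm^[i] s', Submodule.subset_span (Or.inr ⟨i, rfl⟩), rfl⟩
  have hCsurj : ∀ b ∈ C, ∃ a ∈ C, pm a = b := fun b hb => exists_pm_eq hpm habelC (hCP hb)
  have hdC : d ∈ C := C.sub_mem hvC hs'C
  have hdss : IsSemisimpleElt F pm d := semisimple_of_surj hpm habelC hstabC hCsurj hdC
  -- d is both semisimple and nilpotent, hence zero
  set SD : Set L := Set.range fun j => pm^[j] d with hSD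
  set D : Submodule F L := Submodule.span F SD with hD
  have hgenD : ∀ g ∈ SD, ∀ g' ∈ SD, ⁅g, g'⁆ = (0:L) := by
    rintro g ⟨i, rfl⟩ g' ⟨j, rfl⟩
    exact pm_iter_bracket hpm (lie_self d) i j
  have habelD : ∀ a ∈ D, ∀ b ∈ D, ⁅a,b⁆ = (0:L) := span_abelian hgenD
  have hstabD : ∀ a ∈ D, pm a ∈ D := by
    intro a ha
    refine Submodule.span_le.mpr ?_ (pm_mem_span_of_comm hpm hgenD ha)
    rintro w ⟨u, ⟨i, rfl⟩, rfl⟩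
    refine Submodule.subset_span ⟨i+1, ?_⟩
    show pm^[i+1] d = pm (pm^[i] d)
    rw [Function.iterate_succ_apply']
  have hDP : D ≤ pIm F pm D := by
    rw [hD, Submodule.span_le]
    rintro g ⟨i, rfl⟩
    match i with
    | 0 =>
      have := semisimple_mem_span hpm hdss
      refine Submodule.span_le.mpr ?_ this
      rintro w ⟨j, rfl⟩
      show pm^[j+1] d ∈ pIm F pm D
      rw [Function.iterate_succ_apply']
      exact Submodule.subset_span ⟨pm^[j] d, Submodule.subset_span ⟨j, rfl⟩, rfl⟩
    | (i+1) =>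
      show pm^[i+1] d ∈ pIm F pm D
      rw [Function.iterate_succ_apply']
      exact Submodule.subset_span ⟨pm^[i] d, Submodule.subset_span ⟨i, rfl⟩, rfl⟩
  have hDsurj : ∀ b ∈ D, ∃ a ∈ D, pm a = b := fun b hb => exists_pm_eq hpm habelD (hDP hb)
  have hinjD := pm_inj hpm habelD hstabD hDsurj
  have hdD : d ∈ D := Submodule.subset_span ⟨0, rfl⟩
  have hd0 : d = 0 := by
    have key : ∀ m : ℕ, ∀ u ∈ D, pm^[m] u = 0 → u = 0 := by
      intro m
      induction m with
      | zero => intro u _ h; exact h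
      | succ m ih =>
        intro u hu h
        refine hinjD u hu (ih (pm u) (hstabD u hu) ?_)
        rwa [← Function.iterate_succ_apply]
    exact key (max m' N) d hdD hdnil
  -- conclude
  have hs'v2 : s' = v := by
    have : v - s' = 0 := hd0
    rw [sub_eq_zero] at this
    exact this.symm
  have hn'n2 : n' = n := by
    have : n' - n = 0 := hd2 ▸ hd0
    rwa [sub_eq_zero] at this
  rw [Prod.mk.injEq]
  exact ⟨hs'v2, hn'n2⟩
end

section
/- Let L be a finite-dimensional Lie algebra over a field of characteristic p > 0. Any two minimal p-envelopes of L (those of minimal dimension among all finite-dimensional p-envelopes) are isomorphic as ordinary Lie algebras. -/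
open scoped TensorProduct

universe u

/-- A `p`-envelope of a Lie algebra `L`: a restricted Lie algebra together with an injective
Lie homomorphism from `L` whose image generates it as a `p`-subalgebra. -/
structure PEnvelope (p : ℕ) (F : Type u) [Field F] (L : Type u) [LieRing L]
    [LieAlgebra F L] where
  carrier : Type u
  [lieRing : LieRing carrier]
  [lieAlg : LieAlgebra F carrier]
  pm : carrier → carrier
  isPMap : IsPMap p F carrier pm
  incl : L →ₗ⁅F⁆ carrier
  injective : Function.Injective incl
  generates : pSpan F pm (Set.range incl) = ⊤

attribute [instance] PEnvelope.lieRing PEnvelope.lieAlg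

/-- A finite-dimensional `p`-envelope is minimal if its dimension is least among the
dimensions of all finite-dimensional `p`-envelopes of `L`. -/
def PEnvelope.IsMinimal {p : ℕ} {F : Type u} [Field F] {L : Type u} [LieRing L]
    [LieAlgebra F L] (E : PEnvelope p F L) : Prop :=
  FiniteDimensional F E.carrier ∧
    ∀ E' : PEnvelope p F L, FiniteDimensional F E'.carrier →
      Module.finrank F E.carrier ≤ Module.finrank F E'.carrier

/-! ### Auxiliary development -/

attribute [local instance] LieRing.ofAssociativeRing

section Basic
variable {F : Type*} [Field F] {M N : Type*} [LieRing M] [LieAlgebra F M]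
  [LieRing N] [LieAlgebra F N]

theorem adIter_map (f : M → N) (hf : ∀ x y, f ⁅x, y⁆ = ⁅f x, f y⁆) (z : M) (n : ℕ) (w : M) :
    f (adIter z n w) = adIter (f z) n (f w) := by
  induction n with
  | zero => rfl
  | succ n ih => show f ⁅z, adIter z n w⁆ = ⁅f z, adIter (f z) n (f w)⁆; rw [hf, ih]

theorem adIter_succ_inner (z : M) (n : ℕ) (w : M) :
    adIter z (n+1) w = adIter z n ⁅z, w⁆ := by
  induction n with
  | zero => rfl
  | succ n ih => show ⁅z, adIter z (n+1) w⁆ = ⁅z, adIter z n ⁅z,w⁆⁆; rw [ih]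

theorem adIter_zero_right (z : M) (n : ℕ) : adIter z n (0 : M) = 0 := by
  induction n with
  | zero => rfl
  | succ n ih => show ⁅z, adIter z n 0⁆ = 0; rw [ih, lie_zero]

theorem adIter_mem_of_stable {K : LieSubalgebra F M} {z w : M} (hw : w ∈ K)
    (hz : ∀ y ∈ K, ⁅z, y⁆ ∈ K) (n : ℕ) : adIter z n w ∈ K := by
  induction n with
  | zero => exact hw
  | succ n ih => exact hz _ ih

theorem mem_pSpan_iff {pm : M → M} {S : Set M} {x : M} :
    x ∈ pSpan F pm S ↔
      ∀ K : LieSubalgebra F M, IsPSubalgebra F pm K → S ⊆ K → x ∈ K := by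
  constructor
  · intro hx K hK hS
    have h1 : ((pSpan F pm S : LieSubalgebra F M) : Set M) ⊆ K := by
      rw [pSpan, LieSubalgebra.coe_sInf]
      intro y hy
      exact Set.mem_iInter₂.mp hy K ⟨hK, hS⟩
    exact h1 hx
  · intro h
    rw [pSpan]
    have : x ∈ (↑(sInf {H : LieSubalgebra F M | IsPSubalgebra F pm H ∧ S ⊆ H}) : Set M) := by
      rw [LieSubalgebra.coe_sInf]
      exact Set.mem_iInter₂.mpr fun K hK => h K hK.1 hK.2
    exact this

theorem subset_pSpan (pm : M → M) (S : Set M) : S ⊆ ↑(pSpan F pm S) :=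
  fun _x hx => mem_pSpan_iff.mpr fun _K _hK hS => hS hx

theorem pSpan_isP (pm : M → M) (S : Set M) : IsPSubalgebra F pm (pSpan F pm S) := by
  intro x hx
  exact mem_pSpan_iff.mpr fun K hK hS => hK x (mem_pSpan_iff.mp hx K hK hS)

theorem pSpan_le {pm : M → M} {S : Set M} {K : LieSubalgebra F M}
    (hK : IsPSubalgebra F pm K) (hS : S ⊆ K) : pSpan F pm S ≤ K :=
  fun _x hx => mem_pSpan_iff.mp hx K hK hS

end Basic

section Span
variable {F : Type*} [Field F] {M : Type*} [LieRing M] [LieAlgebra F M]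
  {p : ℕ} {pm : M → M}

theorem lie_mem_of_mem_pSpan_left (hpm : ∀ a x : M, ⁅pm a, x⁆ = adIter a p x)
    (R : LieSubalgebra F M) {h : M} (hh : h ∈ pSpan F pm (R : Set M)) :
    ∀ r ∈ R, ⁅h, r⁆ ∈ R := by
  let K : LieSubalgebra F M :=
    { carrier := {x | ∀ r ∈ R, ⁅x, r⁆ ∈ R}
      add_mem' := fun {x y} hx hy r hr => by
        rw [add_lie]; exact add_mem (hx r hr) (hy r hr)
      zero_mem' := fun r hr => by rw [zero_lie]; exact zero_mem _
      smul_mem' := fun c x hx r hr => by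
        rw [smul_lie]; exact Submodule.smul_mem _ _ (hx r hr)
      lie_mem' := fun {x y} hx hy r hr => by
        rw [lie_lie]; exact sub_mem (hx _ (hy r hr)) (hy _ (hx r hr)) }
  have hKP : IsPSubalgebra F pm K := by
    intro x hx r hr
    rw [hpm]
    exact adIter_mem_of_stable hr (fun y hy => hx y hy) p
  have hRK : (R : Set M) ⊆ K := fun x hx r hr => R.lie_mem hx hr
  exact mem_pSpan_iff.mp hh K hKP hRK

theorem lie_mem_of_mem_pSpan (hpm : ∀ a x : M, ⁅pm a, x⁆ = adIter a p x) (hp : 0 < p)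
    (R : LieSubalgebra F M) {h h' : M} (hh : h ∈ pSpan F pm (R : Set M))
    (hh' : h' ∈ pSpan F pm (R : Set M)) : ⁅h, h'⁆ ∈ R := by
  let K : LieSubalgebra F M :=
    { carrier := {x | ∀ h ∈ pSpan F pm (R : Set M), ⁅x, h⁆ ∈ R}
      add_mem' := fun {x y} hx hy r hr => by
        rw [add_lie]; exact add_mem (hx r hr) (hy r hr)
      zero_mem' := fun r hr => by rw [zero_lie]; exact zero_mem _
      smul_mem' := fun c x hx r hr => by
        rw [smul_lie]; exact Submodule.smul_mem _ _ (hx r hr)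
      lie_mem' := fun {x y} hx hy g hg => by
        rw [lie_lie]
        have h1 : ⁅y, g⁆ ∈ R := hy g hg
        have h2 : ⁅x, g⁆ ∈ R := hx g hg
        exact sub_mem (hx _ (subset_pSpan pm (R : Set M) h1))
          (hy _ (subset_pSpan pm (R : Set M) h2)) }
  have hKP : IsPSubalgebra F pm K := by
    intro x hx g hg
    rw [hpm]
    obtain ⟨n, hn⟩ : ∃ n, p = n + 1 := ⟨p - 1, (Nat.succ_pred_eq_of_pos hp).symm⟩
    rw [hn, adIter_succ_inner]
    have hxg : ⁅x, g⁆ ∈ R := hx g hg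
    exact adIter_mem_of_stable hxg
      (fun y hy => hx y (subset_pSpan pm (R : Set M) hy)) n
  have hRK : (R : Set M) ⊆ K := by
    intro x hx g hg
    have : ⁅g, x⁆ ∈ R := lie_mem_of_mem_pSpan_left hpm R hg x hx
    rw [← lie_skew]
    exact neg_mem this
  exact mem_pSpan_iff.mp hh K hKP hRK h' hh'

theorem central_of_lie_gen_eq_zero (hpm : ∀ a x : M, ⁅pm a, x⁆ = adIter a p x) (hp : 0 < p)
    (R : LieSubalgebra F M) (hgen : pSpan F pm (R : Set M) = ⊤)
    {x : M} (hx : ∀ r ∈ R, ⁅x, r⁆ = 0) : ∀ y : M, ⁅x, y⁆ = 0 := by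
  intro y
  let K : LieSubalgebra F M :=
    { carrier := {y | ⁅y, x⁆ = 0}
      add_mem' := fun {u v} hu hv => by
        rw [Set.mem_setOf_eq] at *; rw [add_lie, hu, hv, add_zero]
      zero_mem' := by simp
      smul_mem' := fun c u hu => by rw [Set.mem_setOf_eq] at *; rw [smul_lie, hu, smul_zero]
      lie_mem' := fun {u v} hu hv => by
        rw [Set.mem_setOf_eq] at *
        rw [lie_lie, hu, hv, lie_zero, lie_zero, sub_zero] }
  have hKP : IsPSubalgebra F pm K := by
    intro u hu
    show ⁅pm u, x⁆ = 0
    rw [hpm]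
    obtain ⟨n, hn⟩ : ∃ n, p = n + 1 := ⟨p - 1, (Nat.succ_pred_eq_of_pos hp).symm⟩
    rw [hn, adIter_succ_inner, hu, adIter_zero_right]
  have hRK : (R : Set M) ⊆ K := by
    intro r hr
    show ⁅r, x⁆ = 0
    rw [← lie_skew, hx r hr, neg_zero]
  have : y ∈ K := mem_pSpan_iff.mp (hgen ▸ LieSubalgebra.mem_top y) K hKP hRK
  rw [← lie_skew, this, neg_zero]

end Span
section ProdLie
variable {F : Type*} [Field F] {L M N : Type*} [LieRing L] [LieAlgebra F L]
  [LieRing M] [LieAlgebra F M] [LieRing N] [LieAlgebra F N]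

instance prodLieRing : LieRing (M × N) where
  bracket x y := (⁅x.1, y.1⁆, ⁅x.2, y.2⁆)
  add_lie x y z := by
    show (⁅x.1 + y.1, z.1⁆, ⁅x.2 + y.2, z.2⁆) = _
    rw [add_lie, add_lie]; rfl
  lie_add x y z := by
    show (⁅x.1, y.1 + z.1⁆, ⁅x.2, y.2 + z.2⁆) = _
    rw [lie_add, lie_add]; rfl
  lie_self x := by
    show (⁅x.1, x.1⁆, ⁅x.2, x.2⁆) = (0, 0)
    rw [lie_self, lie_self]
  leibniz_lie x y z := by
    show (⁅x.1, ⁅y.1, z.1⁆⁆, ⁅x.2, ⁅y.2, z.2⁆⁆)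
        = (⁅⁅x.1, y.1⁆, z.1⁆ + ⁅y.1, ⁅x.1, z.1⁆⁆, ⁅⁅x.2, y.2⁆, z.2⁆ + ⁅y.2, ⁅x.2, z.2⁆⁆)
    rw [← leibniz_lie, ← leibniz_lie]

@[simp] theorem prod_bracket (x y : M × N) : ⁅x, y⁆ = (⁅x.1, y.1⁆, ⁅x.2, y.2⁆) := rfl

instance prodLieAlgebra : LieAlgebra F (M × N) where
  lie_smul t x y := by
    show (⁅x.1, t • y.1⁆, ⁅x.2, t • y.2⁆) = _
    rw [lie_smul, lie_smul]; rfl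

/-- First projection as a Lie algebra hom. -/
def lieFst : M × N →ₗ⁅F⁆ M :=
  { LinearMap.fst F M N with map_lie' := fun {_ _} => rfl }

/-- Second projection as a Lie algebra hom. -/
def lieSnd : M × N →ₗ⁅F⁆ N :=
  { LinearMap.snd F M N with map_lie' := fun {_ _} => rfl }

@[simp] theorem lieFst_apply (x : M × N) : (lieFst (F := F)) x = x.1 := rfl
@[simp] theorem lieSnd_apply (x : M × N) : (lieSnd (F := F)) x = x.2 := rfl

/-- Pairing of two Lie algebra homs. -/
def LieHom.prodMk (f : L →ₗ⁅F⁆ M) (g : L →ₗ⁅F⁆ N) : L →ₗ⁅F⁆ M × N :=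
  { LinearMap.prod f.toLinearMap g.toLinearMap with
    map_lie' := fun {x y} => by
      show (f ⁅x, y⁆, g ⁅x, y⁆) = (⁅f x, f y⁆, ⁅g x, g y⁆)
      rw [f.map_lie, g.map_lie] }

@[simp] theorem LieHom.prodMk_apply (f : L →ₗ⁅F⁆ M) (g : L →ₗ⁅F⁆ N) (x : L) :
    f.prodMk g x = (f x, g x) := rfl

theorem adIter_prod (z w : M × N) (n : ℕ) :
    adIter z n w = (adIter z.1 n w.1, adIter z.2 n w.2) := by
  induction n with
  | zero => rfl
  | succ n ih => show ⁅z, adIter z n w⁆ = _; rw [ih]; rfl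

end ProdLie
/-- The `p`-subalgebra of `End L` generated by the image of `ad`; it depends only on `L`. -/
def pAlg (p : ℕ) (F : Type u) [Field F] (L : Type u) [LieRing L] [LieAlgebra F L] :
    LieSubalgebra F (Module.End F L) :=
  pSpan F (· ^ p) (Set.range ⇑(LieAlgebra.ad F L))

section Envelope
variable {p : ℕ} [Fact p.Prime] {F : Type u} [Field F] [CharP F p]
  {L : Type u} [LieRing L] [LieAlgebra F L]

namespace PEnvelope
variable (E : PEnvelope p F L)

theorem range_pSpan_top :
    pSpan F E.pm ((E.incl.range : LieSubalgebra F E.carrier) : Set E.carrier) = ⊤ := by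
  rw [LieHom.coe_range]; exact E.generates

theorem lie_mem_range' (x y : E.carrier) : ⁅x, y⁆ ∈ E.incl.range := by
  have hm : ∀ z : E.carrier, z ∈ pSpan F E.pm ((E.incl.range : LieSubalgebra F E.carrier) : Set E.carrier) := by
    intro z; rw [range_pSpan_top]; exact LieSubalgebra.mem_top z
  exact lie_mem_of_mem_pSpan E.isPMap.ad_pow (Fact.out : p.Prime).pos E.incl.range (hm x) (hm y)

theorem central_of_lie_incl_eq_zero {x : E.carrier} (hx : ∀ a : L, ⁅x, E.incl a⁆ = 0) :
    ∀ y : E.carrier, ⁅x, y⁆ = 0 := by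
  refine central_of_lie_gen_eq_zero E.isPMap.ad_pow (Fact.out : p.Prime).pos E.incl.range
    (range_pSpan_top E) ?_
  rintro r hr
  obtain ⟨a, rfl⟩ := (E.incl.mem_range r).mp hr
  exact hx a

/-- The action of an element of the envelope on `L`, pulled back through `incl`. -/
noncomputable def phiFun (x : E.carrier) (a : L) : L :=
  ((E.incl.mem_range ⁅x, E.incl a⁆).mp (E.lie_mem_range' x (E.incl a))).choose

@[simp] theorem incl_phiFun (x : E.carrier) (a : L) :
    E.incl (E.phiFun x a) = ⁅x, E.incl a⁆ :=
  ((E.incl.mem_range ⁅x, E.incl a⁆).mp (E.lie_mem_range' x (E.incl a))).choose_spec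

/-- The canonical Lie homomorphism from a `p`-envelope to `End L`. -/
noncomputable def Phi : E.carrier →ₗ⁅F⁆ Module.End F L where
  toFun x :=
    { toFun := E.phiFun x
      map_add' := fun a b => E.injective <| by
        rw [map_add, incl_phiFun, incl_phiFun, incl_phiFun, map_add, lie_add]
      map_smul' := fun c a => E.injective <| by
        rw [RingHom.id_apply, map_smul, incl_phiFun, incl_phiFun, map_smul, lie_smul] }
  map_add' x y := LinearMap.ext fun a => E.injective <| by
    simp only [LinearMap.coe_mk, AddHom.coe_mk, LinearMap.add_apply, map_add,
      incl_phiFun, add_lie]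
  map_smul' c x := LinearMap.ext fun a => E.injective <| by
    simp only [LinearMap.coe_mk, AddHom.coe_mk, LinearMap.smul_apply, map_smul,
      RingHom.id_apply, incl_phiFun, smul_lie]
  map_lie' {x y} := LinearMap.ext fun a => E.injective <| by
    simp only [LinearMap.coe_mk, AddHom.coe_mk, Ring.lie_def, LinearMap.sub_apply,
      Module.End.mul_apply, map_sub, incl_phiFun, lie_lie]

@[simp] theorem incl_Phi_apply (x : E.carrier) (a : L) :
    E.incl (E.Phi x a) = ⁅x, E.incl a⁆ :=
  E.incl_phiFun x a

theorem Phi_incl (a : L) : E.Phi (E.incl a) = LieAlgebra.ad F L a := by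
  apply LinearMap.ext; intro b
  apply E.injective
  rw [incl_Phi_apply, LieAlgebra.ad_apply, ← LieHom.map_lie]

theorem incl_Phi_pow (x : E.carrier) (n : ℕ) (a : L) :
    E.incl ((E.Phi x ^ n) a) = adIter x n (E.incl a) := by
  induction n generalizing a with
  | zero => rfl
  | succ n ih =>
    rw [pow_succ, Module.End.mul_apply, ih, adIter_succ_inner]
    congr 1
    rw [incl_Phi_apply]

theorem Phi_pm (x : E.carrier) : E.Phi (E.pm x) = E.Phi x ^ p := by
  apply LinearMap.ext; intro a
  apply E.injective
  rw [incl_Phi_apply, incl_Phi_pow, E.isPMap.ad_pow]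

theorem central_of_Phi_eq_zero {x : E.carrier} (hx : E.Phi x = 0) :
    ∀ y : E.carrier, ⁅x, y⁆ = 0 := by
  apply central_of_lie_incl_eq_zero
  intro a
  have : E.incl (E.Phi x a) = E.incl 0 := by rw [hx]; rfl
  rw [incl_Phi_apply, map_zero] at this
  exact this

theorem Phi_mem_pAlg (x : E.carrier) : E.Phi x ∈ pAlg p F L := by
  let K : LieSubalgebra F E.carrier :=
    { carrier := {x | E.Phi x ∈ pAlg p F L}
      add_mem' := fun {u v} hu hv => by
        rw [Set.mem_setOf_eq, map_add]; exact add_mem hu hv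
      zero_mem' := by rw [Set.mem_setOf_eq, map_zero]; exact zero_mem _
      smul_mem' := fun c u hu => by
        rw [Set.mem_setOf_eq, map_smul]; exact Submodule.smul_mem _ _ hu
      lie_mem' := fun {u v} hu hv => by
        rw [Set.mem_setOf_eq, LieHom.map_lie]; exact LieSubalgebra.lie_mem _ hu hv }
  have hKP : IsPSubalgebra F E.pm K := by
    intro u hu
    show E.Phi (E.pm u) ∈ pAlg p F L
    rw [Phi_pm]
    exact pSpan_isP _ _ _ hu
  have hRK : ((E.incl.range : LieSubalgebra F E.carrier) : Set E.carrier) ⊆ K := by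
    intro r hr
    obtain ⟨a, rfl⟩ := (E.incl.mem_range r).mp hr
    show E.Phi (E.incl a) ∈ pAlg p F L
    rw [Phi_incl]
    exact subset_pSpan _ _ (Set.mem_range_self a)
  have hx : x ∈ pSpan F E.pm ((E.incl.range : LieSubalgebra F E.carrier) : Set E.carrier) := by
    rw [range_pSpan_top]; exact LieSubalgebra.mem_top x
  exact mem_pSpan_iff.mp hx K hKP hRK

theorem pAlg_le_range_Phi {D : Module.End F L} (hD : D ∈ pAlg p F L) :
    ∃ x : E.carrier, E.Phi x = D := by
  let J : LieSubalgebra F (Module.End F L) := LieSubalgebra.map E.Phi ⊤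
  have hJP : IsPSubalgebra F (· ^ p) J := by
    intro D hD
    obtain ⟨x, -, rfl⟩ := (LieSubalgebra.mem_map _ _ _).mp hD
    exact (LieSubalgebra.mem_map _ _ _).mpr
      ⟨E.pm x, LieSubalgebra.mem_top _, by simpa using E.Phi_pm x⟩
  have hJR : Set.range ⇑(LieAlgebra.ad F L) ⊆ J := by
    rintro _ ⟨a, rfl⟩
    exact (LieSubalgebra.mem_map _ _ _).mpr ⟨E.incl a, LieSubalgebra.mem_top _, E.Phi_incl a⟩
  obtain ⟨x, -, hx⟩ := (LieSubalgebra.mem_map _ _ _).mp (pSpan_le hJP hJR hD)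
  exact ⟨x, hx⟩

theorem range_Phi_toLinearMap :
    LinearMap.range E.Phi.toLinearMap = (pAlg p F L).toSubmodule := by
  apply le_antisymm
  · rintro _ ⟨x, rfl⟩
    exact E.Phi_mem_pAlg x
  · intro D hD
    obtain ⟨x, hx⟩ := E.pAlg_le_range_Phi hD
    exact ⟨x, hx⟩

end PEnvelope
end Envelope
section BaseChange
variable {F : Type*} [Field F]

section Mod
variable {V W : Type*} [AddCommGroup V] [Module F V] [AddCommGroup W] [Module F W]

/-- Extract the `n`-th polynomial coefficient of an element of `F[X] ⊗ V`. -/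
noncomputable def coeffTensor (n : ℕ) : Polynomial F ⊗[F] V →ₗ[F] V :=
  (TensorProduct.lid F V).toLinearMap ∘ₗ
    TensorProduct.map (Polynomial.lcoeff F n) LinearMap.id

@[simp] theorem coeffTensor_tmul (n : ℕ) (f : Polynomial F) (x : V) :
    coeffTensor n (f ⊗ₜ[F] x) = f.coeff n • x := by
  simp [coeffTensor]

theorem coeffTensor_baseChange (f : V →ₗ[F] W) (n : ℕ) (t : Polynomial F ⊗[F] V) :
    coeffTensor n (f.baseChange (Polynomial F) t) = f (coeffTensor n t) := by
  induction t using TensorProduct.induction_on with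
  | zero => simp
  | tmul g x => simp [LinearMap.baseChange_tmul]
  | add t1 t2 h1 h2 => simp [map_add, h1, h2]

theorem baseChange_injective {f : V →ₗ[F] W} (hf : Function.Injective f) :
    Function.Injective (f.baseChange (Polynomial F)) := by
  rw [LinearMap.baseChange_eq_ltensor]
  exact Module.Flat.lTensor_preserves_injective_linearMap f hf

end Mod

section LieBC
variable {M N : Type*} [LieRing M] [LieAlgebra F M] [LieRing N] [LieAlgebra F N]

theorem lieHom_baseChange_bracket (f : M →ₗ⁅F⁆ N) (u v : Polynomial F ⊗[F] M) :
    f.toLinearMap.baseChange (Polynomial F) ⁅u, v⁆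
      = ⁅f.toLinearMap.baseChange (Polynomial F) u, f.toLinearMap.baseChange (Polynomial F) v⁆ := by
  have hzl : ∀ w : Polynomial F ⊗[F] M, ⁅(0 : Polynomial F ⊗[F] M), w⁆ = 0 :=
    fun w => zero_lie w
  have hlz : ∀ w : Polynomial F ⊗[F] M, ⁅w, (0 : Polynomial F ⊗[F] M)⁆ = 0 :=
    fun w => lie_zero w
  have hzl' : ∀ w : Polynomial F ⊗[F] N, ⁅(0 : Polynomial F ⊗[F] N), w⁆ = 0 :=
    fun w => zero_lie w
  have hlz' : ∀ w : Polynomial F ⊗[F] N, ⁅w, (0 : Polynomial F ⊗[F] N)⁆ = 0 :=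
    fun w => lie_zero w
  have hal : ∀ u v w : Polynomial F ⊗[F] M, ⁅u + v, w⁆ = ⁅u, w⁆ + ⁅v, w⁆ :=
    fun u v w => add_lie u v w
  have hla : ∀ u v w : Polynomial F ⊗[F] M, ⁅u, v + w⁆ = ⁅u, v⁆ + ⁅u, w⁆ :=
    fun u v w => lie_add u v w
  have hal' : ∀ u v w : Polynomial F ⊗[F] N, ⁅u + v, w⁆ = ⁅u, w⁆ + ⁅v, w⁆ :=
    fun u v w => add_lie u v w
  have hla' : ∀ u v w : Polynomial F ⊗[F] N, ⁅u, v + w⁆ = ⁅u, v⁆ + ⁅u, w⁆ :=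
    fun u v w => lie_add u v w
  have htm : ∀ (s t : Polynomial F) (x y : M), ⁅s ⊗ₜ[F] x, t ⊗ₜ[F] y⁆ = (s * t) ⊗ₜ[F] ⁅x, y⁆ :=
    fun s t x y => LieAlgebra.ExtendScalars.bracket_tmul F (Polynomial F) M M s t x y
  have htm' : ∀ (s t : Polynomial F) (x y : N), ⁅s ⊗ₜ[F] x, t ⊗ₜ[F] y⁆ = (s * t) ⊗ₜ[F] ⁅x, y⁆ :=
    fun s t x y => LieAlgebra.ExtendScalars.bracket_tmul F (Polynomial F) N N s t x y
  induction u using TensorProduct.induction_on with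
  | zero => rw [hzl, map_zero]; exact (hzl' _).symm
  | tmul a x =>
    induction v using TensorProduct.induction_on with
    | zero => rw [hlz, map_zero]; exact (hlz' _).symm
    | tmul b y =>
      rw [htm, LinearMap.baseChange_tmul, LinearMap.baseChange_tmul,
        LinearMap.baseChange_tmul, htm']
      congr 1
      exact f.map_lie x y
    | add v1 v2 h1 h2 => rw [hla, map_add, map_add, h1, h2, hla']
  | add u1 u2 h1 h2 => rw [hal, map_add, map_add, h1, h2, hal']

theorem lieHom_baseChange_adIter (f : M →ₗ⁅F⁆ N) (z : Polynomial F ⊗[F] M) (n : ℕ)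
    (w : Polynomial F ⊗[F] M) :
    f.toLinearMap.baseChange (Polynomial F) (adIter z n w)
      = adIter (f.toLinearMap.baseChange (Polynomial F) z) n
          (f.toLinearMap.baseChange (Polynomial F) w) :=
  adIter_map _ (lieHom_baseChange_bracket f) z n w

end LieBC
end BaseChange
section Construction
variable {p : ℕ} [Fact p.Prime] {F : Type u} [Field F] [CharP F p]
  {L : Type u} [LieRing L] [LieAlgebra F L] [FiniteDimensional F L]

namespace PEnvelope

/-- A linear equivalence between a Lie subalgebra and its underlying submodule. -/
def subEquiv {M : Type u} [LieRing M] [LieAlgebra F M] (K : LieSubalgebra F M) :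
    ↥K ≃ₗ[F] ↥K.toSubmodule where
  toFun x := ⟨x.1, x.2⟩
  invFun x := ⟨x.1, x.2⟩
  map_add' _ _ := rfl
  map_smul' _ _ := rfl
  left_inv _ := rfl
  right_inv _ := rfl

set_option maxHeartbeats 2000000 in
theorem exists_small (E : PEnvelope p F L) (hFD : FiniteDimensional F E.carrier) :
    ∃ G : PEnvelope p F L, FiniteDimensional F G.carrier ∧
      Module.finrank F G.carrier =
        Module.finrank F ↥((pAlg p F L).toSubmodule) +
          Module.finrank F ↥(LinearMap.ker (LieAlgebra.ad F L).toLinearMap) := by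
  classical
  haveI := hFD
  have hp : 0 < p := (Fact.out : p.Prime).pos
  set Φl : E.carrier →ₗ[F] Module.End F L := E.Phi.toLinearMap with hΦl
  have hΦapp : ∀ x, Φl x = E.Phi x := fun _ => rfl
  set Asub : Submodule F (Module.End F L) := (pAlg p F L).toSubmodule with hAsub
  set adl : L →ₗ[F] Module.End F L := (LieAlgebra.ad F L).toLinearMap with hadl
  set adLsub : Submodule F (Module.End F L) := LinearMap.range adl with hadLsub
  have hadA : adLsub ≤ Asub := by
    rintro _ ⟨a, rfl⟩
    exact subset_pSpan _ _ ⟨a, rfl⟩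
  -- complement B of ad L inside A
  obtain ⟨q0, hq0⟩ := Submodule.exists_isCompl (Submodule.comap Asub.subtype adLsub)
  set B : Submodule F (Module.End F L) := q0.map Asub.subtype with hB
  have hBA : B ≤ Asub := Submodule.map_subtype_le _ _
  have hdisj : adLsub ⊓ B = ⊥ := by
    apply le_bot_iff.mp
    rintro D ⟨hD1, hD2⟩
    obtain ⟨⟨D', hD'⟩, hq, rfl⟩ := hD2
    have : (⟨D', hD'⟩ : ↥Asub) ∈ Submodule.comap Asub.subtype adLsub ⊓ q0 := ⟨hD1, hq⟩
    rw [hq0.inf_eq_bot] at this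
    simp only [Submodule.mem_bot] at this
    rw [this]
    rfl
  have hsup : adLsub ⊔ B = Asub := by
    have h1 : (Submodule.comap Asub.subtype adLsub) ⊔ q0 = ⊤ := hq0.sup_eq_top
    have h2 := congrArg (Submodule.map Asub.subtype) h1
    rw [Submodule.map_sup, Submodule.map_comap_subtype, inf_of_le_right hadA,
      Submodule.map_subtype_top] at h2
    exact h2
  -- range of Φ is A
  have hrange : LinearMap.range Φl = Asub := by
    apply le_antisymm
    · rintro _ ⟨x, rfl⟩
      exact E.Phi_mem_pAlg x
    · intro D hD
      obtain ⟨x, hx⟩ := E.pAlg_le_range_Phi hD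
      exact ⟨x, hx⟩
  -- a linear section of Φ over B
  obtain ⟨σ, hσ⟩ : ∃ σ : ↥B →ₗ[F] E.carrier, ∀ b : ↥B, Φl (σ b) = (b : Module.End F L) := by
    have hBR : B ≤ LinearMap.range Φl := hrange ▸ hBA
    obtain ⟨s, hs⟩ := Module.projective_lifting_property Φl.rangeRestrict
      (Submodule.inclusion hBR) (LinearMap.surjective_rangeRestrict Φl)
    refine ⟨s, fun b => ?_⟩
    have := congrArg (fun f => (f b : Module.End F L)) hs
    simpa using this
  have hσinj : Function.Injective σ := by
    intro b1 b2 h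
    have := congrArg Φl h
    rw [hσ, hσ] at this
    exact Subtype.ext this
  -- the subalgebra G
  set L0sub : Submodule F E.carrier := (E.incl.range : LieSubalgebra F E.carrier).toSubmodule
    with hL0sub
  set Gsub : Submodule F E.carrier := L0sub ⊔ LinearMap.range σ with hGsub
  let GLie : LieSubalgebra F E.carrier :=
    { Gsub with
      lie_mem' := fun {x y} _ _ =>
        Submodule.mem_sup_left (E.lie_mem_range' x y) }
  have hmemG : ∀ x : E.carrier, x ∈ GLie ↔ x ∈ Gsub := fun x => Iff.rfl
  have hL0G : L0sub ≤ Gsub := le_sup_left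
  have hΦincl : ∀ a : L, Φl (E.incl a) = adl a := fun a => E.Phi_incl a
  -- G ∩ ker Φ ≤ L0
  have hGker : ∀ x ∈ Gsub, Φl x = 0 → x ∈ L0sub := by
    intro x hx hx0
    rw [hGsub, Submodule.mem_sup] at hx
    obtain ⟨y, hy, z, hz, rfl⟩ := hx
    obtain ⟨b, rfl⟩ := hz
    obtain ⟨a, ha⟩ := (E.incl.mem_range y).mp hy
    have h1 : Φl y ∈ adLsub := ⟨a, by rw [← ha]; exact (hΦincl a).symm⟩
    have h2 : (↑b : Module.End F L) ∈ adLsub := by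
      have : (↑b : Module.End F L) = -Φl y := by
        have h := hx0
        rw [map_add, hσ] at h
        exact eq_neg_of_add_eq_zero_left (by rwa [add_comm] at h)
      rw [this]
      exact neg_mem h1
    have h3 : (↑b : Module.End F L) ∈ adLsub ⊓ B := ⟨h2, b.2⟩
    rw [hdisj, Submodule.mem_bot] at h3
    have hb0 : b = 0 := Subtype.ext h3
    rw [hb0, map_zero, add_zero]
    exact hy
  -- G + ker Φ = ⊤
  have hGtop : Gsub ⊔ LinearMap.ker Φl = ⊤ := by
    rw [eq_top_iff]
    intro x _
    have hx : Φl x ∈ Asub := hrange ▸ LinearMap.mem_range_self Φl x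
    rw [← hsup, Submodule.mem_sup] at hx
    obtain ⟨u, hu, v, hv, huv⟩ := hx
    obtain ⟨a, ha⟩ := hu
    refine Submodule.mem_sup.mpr ⟨E.incl a + σ ⟨v, hv⟩, ?_, x - (E.incl a + σ ⟨v, hv⟩), ?_,
      by rw [add_sub_cancel]⟩
    · exact add_mem (hL0G (E.incl.mem_range_self a))
        (Submodule.mem_sup_right (LinearMap.mem_range_self σ _))
    · rw [LinearMap.mem_ker, map_sub, map_add, hσ, hΦincl, ha, huv]
      abel
  -- complement W of G inside ker Φ
  obtain ⟨W0, hW0⟩ := Submodule.exists_isCompl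
    (Submodule.comap (LinearMap.ker Φl).subtype (Gsub ⊓ LinearMap.ker Φl))
  set W : Submodule F E.carrier := W0.map (LinearMap.ker Φl).subtype with hW
  have hWker : W ≤ LinearMap.ker Φl := Submodule.map_subtype_le _ _
  have hcompl : IsCompl Gsub W := by
    constructor
    · rw [disjoint_iff]
      apply le_bot_iff.mp
      rintro x ⟨hx1, hx2⟩
      obtain ⟨⟨x', hx'⟩, hw0, rfl⟩ := hx2
      have : (⟨x', hx'⟩ : ↥(LinearMap.ker Φl)) ∈
          Submodule.comap (LinearMap.ker Φl).subtype (Gsub ⊓ LinearMap.ker Φl) ⊓ W0 :=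
        ⟨⟨hx1, hx'⟩, hw0⟩
      rw [hW0.inf_eq_bot] at this
      simp only [Submodule.mem_bot] at this
      rw [this]
      rfl
    · rw [codisjoint_iff]
      rw [eq_top_iff, ← hGtop]
      apply sup_le le_sup_left
      intro x hx
      have h1 : (Gsub ⊓ LinearMap.ker Φl) ⊔ W = LinearMap.ker Φl := by
        have h2 := congrArg (Submodule.map (LinearMap.ker Φl).subtype) hW0.sup_eq_top
        rw [Submodule.map_sup, Submodule.map_comap_subtype,
          inf_eq_right.mpr (inf_le_right : Gsub ⊓ LinearMap.ker Φl ≤ _),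
          Submodule.map_subtype_top, ← hW] at h2
        exact h2
      rw [← h1] at hx
      rcases Submodule.mem_sup.mp hx with ⟨y, hy, z, hz, rfl⟩
      exact add_mem (Submodule.mem_sup_left hy.1) (Submodule.mem_sup_right hz)
  set π : E.carrier →ₗ[F] ↥Gsub := Gsub.linearProjOfIsCompl W hcompl with hπ
  have hπG : ∀ g : ↥Gsub, π ↑g = g := fun g => by
    rw [hπ]
    exact Submodule.linearProjOfIsCompl_apply_left hcompl g
  have hπW : ∀ x : E.carrier, x - ↑(π x) ∈ W := by
    intro x
    have h := Submodule.projection_add_projection_eq_self hcompl x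
    have h2 : x - ↑(π x) = ↑((W.linearProjOfIsCompl Gsub hcompl.symm) x) :=
      (eq_sub_of_add_eq' h).symm
    rw [h2]
    exact Submodule.coe_mem _
  -- central elements
  have hker_central : ∀ w ∈ LinearMap.ker Φl, ∀ y : E.carrier, ⁅w, y⁆ = 0 := by
    intro w hw y
    have h0 : E.Phi w = 0 := by rw [← hΦapp w]; exact hw
    exact E.central_of_Phi_eq_zero h0 y
  -- the new p-map
  set pm' : ↥GLie → ↥GLie := fun g => ⟨↑(π (E.pm ↑g)), (π (E.pm ↑g)).2⟩ with hpm'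
  have hpm'_coe : ∀ g : ↥GLie, (↑(pm' g) : E.carrier) = ↑(π (E.pm ↑g)) := fun _ => rfl
  have hpm'_bracket : ∀ (g : ↥GLie) (y : E.carrier), ⁅(↑(pm' g) : E.carrier), y⁆ = ⁅E.pm ↑g, y⁆ := by
    intro g y
    have hw : E.pm ↑g - ↑(π (E.pm ↑g)) ∈ W := hπW (E.pm ↑g)
    have hc : ⁅E.pm ↑g - ↑(π (E.pm ↑g)), y⁆ = 0 := hker_central _ (hWker hw) y
    have : (↑(pm' g) : E.carrier) = E.pm ↑g - (E.pm ↑g - ↑(π (E.pm ↑g))) := by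
      rw [hpm'_coe]; abel
    rw [this, sub_lie, hc, sub_zero]
  have hΦpm' : ∀ g : ↥GLie, Φl ↑(pm' g) = (Φl ↑g) ^ p := by
    intro g
    have hw : E.pm ↑g - ↑(π (E.pm ↑g)) ∈ W := hπW (E.pm ↑g)
    have h0 : Φl (E.pm ↑g - ↑(π (E.pm ↑g))) = 0 := LinearMap.mem_ker.mp (hWker hw)
    have h1 : Φl ↑(pm' g) = Φl (E.pm ↑g) := by
      rw [hpm'_coe]
      have : (↑(π (E.pm ↑g)) : E.carrier) = E.pm ↑g - (E.pm ↑g - ↑(π (E.pm ↑g))) := by abel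
      rw [this, map_sub, h0, sub_zero]
    rw [h1, hΦapp, hΦapp, E.Phi_pm]
  have hcoe_adIter : ∀ (z : ↥GLie) (n : ℕ) (w : ↥GLie),
      (↑(adIter z n w) : E.carrier) = adIter ↑z n ↑w :=
    fun z n w => adIter_map (fun u : ↥GLie => (u : E.carrier))
      (fun _ _ => rfl) z n w
  -- IsPMap for pm'
  have hIsP : IsPMap p F ↥GLie pm' := by
    constructor
    · intro g x
      apply Subtype.ext
      rw [LieSubalgebra.coe_bracket, hcoe_adIter, hpm'_bracket, E.isPMap.ad_pow]
    · intro c g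
      apply Subtype.ext
      rw [hpm'_coe, hpm'_coe]
      have h1 : (↑(c • g) : E.carrier) = c • ↑g := rfl
      rw [h1, E.isPMap.smul_pow, map_smul]
      rfl
    · intro a b
      obtain ⟨s, hs1, hs2⟩ := E.isPMap.add_pow (↑a : E.carrier) (↑b)
      set j : ↥GLie →ₗ⁅F⁆ E.carrier := GLie.incl with hj
      set jl := j.toLinearMap.baseChange (Polynomial F) with hjl
      have hjinj : Function.Injective jl :=
        baseChange_injective (fun x y h => Subtype.ext h)
      have hjz : jl ((Polynomial.X : Polynomial F) ⊗ₜ[F] a + (1 : Polynomial F) ⊗ₜ[F] b)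
          = (Polynomial.X : Polynomial F) ⊗ₜ[F] (↑a : E.carrier)
            + (1 : Polynomial F) ⊗ₜ[F] (↑b : E.carrier) := by
        rw [map_add, LinearMap.baseChange_tmul, LinearMap.baseChange_tmul]
        rfl
      have hjw : jl ((1 : Polynomial F) ⊗ₜ[F] a) = (1 : Polynomial F) ⊗ₜ[F] (↑a : E.carrier) := by
        rw [LinearMap.baseChange_tmul]
        rfl
      have hT : jl (adIter ((Polynomial.X : Polynomial F) ⊗ₜ[F] a + (1 : Polynomial F) ⊗ₜ[F] b)
            (p-1) ((1 : Polynomial F) ⊗ₜ[F] a))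
          = adIter ((Polynomial.X : Polynomial F) ⊗ₜ[F] (↑a : E.carrier)
              + (1 : Polynomial F) ⊗ₜ[F] (↑b : E.carrier)) (p-1)
              ((1 : Polynomial F) ⊗ₜ[F] (↑a : E.carrier)) := by
        rw [hjl, lieHom_baseChange_adIter, ← hjl, hjz, hjw]
      have hsmem : ∀ i : Fin (p-1), s i ∈ Gsub := by
        intro i
        have h1 : coeffTensor (i : ℕ)
            (adIter ((Polynomial.X : Polynomial F) ⊗ₜ[F] (↑a : E.carrier)
              + (1 : Polynomial F) ⊗ₜ[F] (↑b : E.carrier)) (p-1)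
              ((1 : Polynomial F) ⊗ₜ[F] (↑a : E.carrier))) ∈ Gsub := by
          rw [← hT, hjl, coeffTensor_baseChange]
          exact (coeffTensor (F := F) (i : ℕ) _ : ↥GLie).2
        rw [hs1] at h1
        have h2 : coeffTensor (i : ℕ)
            (∑ k : Fin (p-1), ((k : ℕ)+1) •
              (((Polynomial.X : Polynomial F) ^ (k : ℕ)) ⊗ₜ[F] s k)) = ((i : ℕ)+1) • s i := by
          rw [map_sum, Finset.sum_eq_single i]
          · rw [map_nsmul, coeffTensor_tmul, Polynomial.coeff_X_pow, if_pos rfl, one_smul]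
          · intro k _ hk
            rw [map_nsmul, coeffTensor_tmul, Polynomial.coeff_X_pow, if_neg, zero_smul, smul_zero]
            exact fun h => hk (Fin.ext h.symm)
          · intro h
            exact absurd (Finset.mem_univ i) h
        rw [h2] at h1
        have hip : (i : ℕ) + 1 < p := by
          have := i.isLt
          omega
        have hc : (((i : ℕ) + 1 : ℕ) : F) ≠ 0 := by
          rw [Ne, CharP.cast_eq_zero_iff F p]
          exact Nat.not_dvd_of_pos_of_lt (Nat.succ_pos _) hip
        have h3 : (((i : ℕ) + 1 : ℕ) : F) • s i ∈ Gsub := by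
          rw [Nat.cast_smul_eq_nsmul]
          exact h1
        have h4 := Submodule.smul_mem Gsub ((((i : ℕ) + 1 : ℕ) : F))⁻¹ h3
        rwa [inv_smul_smul₀ hc] at h4
      refine ⟨fun i => ⟨s i, hsmem i⟩, ?_, ?_⟩
      · apply hjinj
        rw [hT, hs1, map_sum]
        apply Finset.sum_congr rfl
        intro i _
        rw [map_nsmul, hjl, LinearMap.baseChange_tmul]
        rfl
      · apply Subtype.ext
        have hab : (↑(a + b) : E.carrier) = ↑a + ↑b := rfl
        have hcoe_sum : (↑(∑ i : Fin (p-1), (⟨s i, hsmem i⟩ : ↥GLie)) : E.carrier)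
            = ∑ i : Fin (p-1), s i := by
          induction (Finset.univ : Finset (Fin (p-1))) using Finset.induction_on with
          | empty => rfl
          | insert _ _ hx ih => rw [Finset.sum_insert hx, Finset.sum_insert hx, ← ih]; rfl
        have hπs : ∀ i : Fin (p-1), π (s i) = ⟨s i, hsmem i⟩ := fun i =>
          hπG ⟨s i, hsmem i⟩
        show (↑(pm' (a+b)) : E.carrier) = ↑(pm' a + pm' b + ∑ i, (⟨s i, hsmem i⟩ : ↥GLie))
        rw [hpm'_coe, hab, hs2]
        have : π (E.pm ↑a + E.pm ↑b + ∑ i, s i)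
            = π (E.pm ↑a) + π (E.pm ↑b) + ∑ i, π (s i) := by
          rw [map_add, map_add, map_sum]
        rw [this]
        have hsum2 : ∑ i, π (s i) = ∑ i, (⟨s i, hsmem i⟩ : ↥Gsub) := by
          apply Finset.sum_congr rfl
          intro i _
          exact hπs i
        rw [hsum2]
        show ((π (E.pm ↑a) : E.carrier) + ↑(π (E.pm ↑b)) + ↑(∑ i, (⟨s i, hsmem i⟩ : ↥Gsub)))
          = ((↑(pm' a) : E.carrier) + ↑(pm' b) + ↑(∑ i, (⟨s i, hsmem i⟩ : ↥GLie)))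
        rw [hpm'_coe, hpm'_coe, hcoe_sum]
  -- the inclusion of L into G
  have hinclG : ∀ a : L, E.incl a ∈ GLie := fun a => hL0G (E.incl.mem_range_self a)
  set incl' : L →ₗ⁅F⁆ ↥GLie :=
    { toFun := fun a => ⟨E.incl a, hinclG a⟩
      map_add' := fun a b => Subtype.ext (E.incl.map_add a b)
      map_smul' := fun c a => Subtype.ext (E.incl.map_smul c a)
      map_lie' := fun {a b} => Subtype.ext (E.incl.map_lie a b) } with hincl'
  have hincl'_inj : Function.Injective incl' := by
    intro a b h
    exact E.injective (congrArg Subtype.val h)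
  -- generation
  have hgen : pSpan F pm' (Set.range ⇑incl') = ⊤ := by
    rw [eq_top_iff]
    intro g _
    set Hs : LieSubalgebra F ↥GLie := pSpan F pm' (Set.range ⇑incl') with hHs
    -- image of Hs under Φ ∘ incl
    set ΦG : ↥GLie →ₗ⁅F⁆ Module.End F L := E.Phi.comp GLie.incl with hΦG
    set J : LieSubalgebra F (Module.End F L) := LieSubalgebra.map ΦG Hs with hJ
    have hJP : IsPSubalgebra F (· ^ p) J := by
      intro D hD
      obtain ⟨h, hh, rfl⟩ := (LieSubalgebra.mem_map _ _ _).mp hD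
      refine (LieSubalgebra.mem_map _ _ _).mpr ⟨pm' h, pSpan_isP _ _ h hh, ?_⟩
      show E.Phi ↑(pm' h) = (fun f => f ^ p) (E.Phi ↑h)
      rw [← hΦapp, ← hΦapp, hΦpm' h]
    have hJR : Set.range ⇑(LieAlgebra.ad F L) ⊆ J := by
      rintro _ ⟨c, rfl⟩
      refine (LieSubalgebra.mem_map _ _ _).mpr
        ⟨incl' c, subset_pSpan _ _ (Set.mem_range_self c), ?_⟩
      show E.Phi (E.incl c) = LieAlgebra.ad F L c
      exact E.Phi_incl c
    have hAJ : pAlg p F L ≤ J := pSpan_le hJP hJR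
    have hgJ : E.Phi ↑g ∈ J := hAJ (E.Phi_mem_pAlg ↑g)
    obtain ⟨h, hh, hΦgh⟩ := (LieSubalgebra.mem_map _ _ _).mp hgJ
    have hdiff : (↑g - ↑h : E.carrier) ∈ L0sub := by
      apply hGker _ (sub_mem g.2 h.2)
      rw [map_sub]
      have : Φl ↑h = Φl ↑g := hΦgh
      rw [this, sub_self]
    obtain ⟨c, hc⟩ := (E.incl.mem_range _).mp hdiff
    have hgc : g = h + incl' c := by
      apply Subtype.ext
      show (↑g : E.carrier) = ↑h + E.incl c
      rw [hc]
      abel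
    rw [hgc]
    exact add_mem hh (subset_pSpan _ _ (Set.mem_range_self c))
  -- assemble the envelope
  refine ⟨{ carrier := ↥GLie
            pm := pm'
            isPMap := hIsP
            incl := incl'
            injective := hincl'_inj
            generates := hgen }, ?_, ?_⟩
  · show FiniteDimensional F ↥GLie
    exact FiniteDimensional.of_injective (subEquiv GLie).toLinearMap (subEquiv GLie).injective
  · -- dimension count
    show Module.finrank F ↥GLie = _
    have hdim0 : Module.finrank F ↥GLie = Module.finrank F ↥Gsub :=
      LinearEquiv.finrank_eq (subEquiv GLie)
    have hinfGLie : L0sub ⊓ LinearMap.range σ = ⊥ := by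
      apply le_bot_iff.mp
      rintro x ⟨hx1, hx2⟩
      obtain ⟨b, rfl⟩ := hx2
      obtain ⟨a, ha⟩ := (E.incl.mem_range _).mp hx1
      have h1 : Φl (σ b) ∈ adLsub := ⟨a, by rw [← ha]; exact (hΦincl a).symm⟩
      rw [hσ] at h1
      have h2 : (↑b : Module.End F L) ∈ adLsub ⊓ B := ⟨h1, b.2⟩
      rw [hdisj, Submodule.mem_bot] at h2
      have : b = 0 := Subtype.ext h2
      rw [this, map_zero]
      exact Submodule.zero_mem ⊥
    have hd1 : Module.finrank F ↥Gsub + 0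
        = Module.finrank F ↥L0sub + Module.finrank F ↥(LinearMap.range σ) := by
      have := Submodule.finrank_sup_add_finrank_inf_eq L0sub (LinearMap.range σ)
      rw [hinfGLie] at this
      rw [← this, finrank_bot]
    have hd2 : Module.finrank F ↥(LinearMap.range σ) = Module.finrank F ↥B :=
      LinearMap.finrank_range_of_inj hσinj
    have hd3 : Module.finrank F ↥L0sub = Module.finrank F L := by
      have : L0sub = LinearMap.range E.incl.toLinearMap := rfl
      rw [this]
      exact LinearMap.finrank_range_of_inj E.injective
    have hd4 : Module.finrank F ↥Asub + 0
        = Module.finrank F ↥adLsub + Module.finrank F ↥B := by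
      have := Submodule.finrank_sup_add_finrank_inf_eq adLsub B
      rw [hdisj, hsup] at this
      rw [← this, finrank_bot]
    have hd5 : Module.finrank F ↥adLsub
        + Module.finrank F ↥(LinearMap.ker adl) = Module.finrank F L :=
      LinearMap.finrank_range_add_finrank_ker adl
    rw [hdim0]
    omega
end PEnvelope
end Construction
section Final
variable {p : ℕ} [Fact p.Prime] {F : Type u} [Field F] [CharP F p]
  {L : Type u} [LieRing L] [LieAlgebra F L] [FiniteDimensional F L]

theorem PEnvelope.minimal_finrank (E : PEnvelope p F L) (hE : E.IsMinimal) :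
    Module.finrank F E.carrier =
      Module.finrank F ↥((pAlg p F L).toSubmodule) +
        Module.finrank F ↥(LinearMap.ker (LieAlgebra.ad F L).toLinearMap) := by
  haveI := hE.1
  obtain ⟨G, hG1, hG2⟩ := E.exists_small hE.1
  have hle : Module.finrank F E.carrier ≤ Module.finrank F G.carrier := hE.2 G hG1
  rw [hG2] at hle
  set Φl := E.Phi.toLinearMap with hΦl
  have hrange := E.range_Phi_toLinearMap
  set CL := LinearMap.ker (LieAlgebra.ad F L).toLinearMap with hCL
  have hkermap : Submodule.map E.incl.toLinearMap CL ≤ LinearMap.ker Φl := by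
    rintro _ ⟨a, ha, rfl⟩
    rw [LinearMap.mem_ker]
    show E.Phi (E.incl a) = 0
    rw [E.Phi_incl]
    exact ha
  have hdim1 : Module.finrank F ↥(Submodule.map E.incl.toLinearMap CL)
      = Module.finrank F ↥CL :=
    (LinearEquiv.finrank_eq (Submodule.equivMapOfInjective E.incl.toLinearMap
      E.injective CL)).symm
  have hdim2 : Module.finrank F ↥CL ≤ Module.finrank F ↥(LinearMap.ker Φl) := by
    rw [← hdim1]
    exact Submodule.finrank_mono hkermap
  have hrn : Module.finrank F ↥(LinearMap.range Φl) + Module.finrank F ↥(LinearMap.ker Φl)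
      = Module.finrank F E.carrier := LinearMap.finrank_range_add_finrank_ker Φl
  rw [hrange] at hrn
  omega

end Final

section Main
variable {p : ℕ} [Fact p.Prime] {F : Type u} [Field F] [CharP F p]
  {L : Type u} [LieRing L] [LieAlgebra F L] [FiniteDimensional F L]

theorem main_iso (E E' : PEnvelope p F L) (hE : E.IsMinimal) (hE' : E'.IsMinimal) :
    Nonempty (E.carrier ≃ₗ⁅F⁆ E'.carrier) := by
  classical
  haveI hFDE := hE.1
  haveI hFDE' := hE'.1
  have hp : 0 < p := (Fact.out : p.Prime).pos
  -- the product restricted algebra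
  set q : E.carrier × E'.carrier → E.carrier × E'.carrier :=
    fun m => (E.pm m.1, E'.pm m.2) with hqdef
  have hq : ∀ (m n : E.carrier × E'.carrier), ⁅q m, n⁆ = adIter m p n := by
    intro m n
    rw [adIter_prod]
    show (⁅E.pm m.1, n.1⁆, ⁅E'.pm m.2, n.2⁆) = _
    rw [E.isPMap.ad_pow, E'.isPMap.ad_pow]
  set Δ : L →ₗ⁅F⁆ E.carrier × E'.carrier := E.incl.prodMk E'.incl with hΔdef
  have hΔapp : ∀ a : L, Δ a = (E.incl a, E'.incl a) := fun a => rfl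
  set RΔ : LieSubalgebra F (E.carrier × E'.carrier) := Δ.range with hRΔ
  set H : LieSubalgebra F (E.carrier × E'.carrier) := pSpan F q (RΔ : Set _) with hH
  have hRH : (RΔ : Set (E.carrier × E'.carrier)) ⊆ (H : Set (E.carrier × E'.carrier)) := by
    rw [hH]; exact subset_pSpan _ _
  have hHbr : ∀ h ∈ H, ∀ h' ∈ H, ⁅h, h'⁆ ∈ RΔ := fun h hh h' hh' =>
    lie_mem_of_mem_pSpan hq hp RΔ hh hh'
  -- every element of H is Φ-balanced
  have hHD : ∀ m ∈ H, E.Phi m.1 = E'.Phi m.2 := by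
    let D : LieSubalgebra F (E.carrier × E'.carrier) :=
      { carrier := {m | E.Phi m.1 = E'.Phi m.2}
        add_mem' := fun {u v} hu hv => by
          rw [Set.mem_setOf_eq] at *
          show E.Phi (u.1 + v.1) = E'.Phi (u.2 + v.2)
          rw [map_add, map_add, hu, hv]
        zero_mem' := by
          show E.Phi 0 = E'.Phi 0
          rw [map_zero, map_zero]
        smul_mem' := fun c u hu => by
          rw [Set.mem_setOf_eq] at *
          show E.Phi (c • u.1) = E'.Phi (c • u.2)
          rw [map_smul, map_smul, hu]
        lie_mem' := fun {u v} hu hv => by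
          rw [Set.mem_setOf_eq] at *
          show E.Phi ⁅u.1, v.1⁆ = E'.Phi ⁅u.2, v.2⁆
          rw [LieHom.map_lie, LieHom.map_lie, hu, hv] }
    have hDP : IsPSubalgebra F q D := by
      intro m hm
      show E.Phi (E.pm m.1) = E'.Phi (E'.pm m.2)
      rw [E.Phi_pm, E'.Phi_pm]
      have hm' : E.Phi m.1 = E'.Phi m.2 := hm
      rw [hm']
    have hDR : (RΔ : Set (E.carrier × E'.carrier)) ⊆ ↑D := by
      intro m hm
      obtain ⟨a, rfl⟩ := (Δ.mem_range m).mp hm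
      show E.Phi (E.incl a) = E'.Phi (E'.incl a)
      rw [E.Phi_incl, E'.Phi_incl]
    exact fun m hm => pSpan_le hDP hDR hm
  -- Φ ∘ fst is surjective from H onto A
  set Hsub : Submodule F (E.carrier × E'.carrier) := H.toSubmodule with hHsub
  set ρ : ↥Hsub →ₗ[F] Module.End F L :=
    E.Phi.toLinearMap ∘ₗ LinearMap.fst F E.carrier E'.carrier ∘ₗ Hsub.subtype with hρ
  have hρapp : ∀ h : ↥Hsub, ρ h = E.Phi (↑h : E.carrier × E'.carrier).1 := fun h => rfl
  have hArho : (pAlg p F L).toSubmodule ≤ LinearMap.range ρ := by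
    intro D hD
    set ΦH : ↥H →ₗ⁅F⁆ Module.End F L :=
      E.Phi.comp ((lieFst (F := F)).comp H.incl) with hΦH
    have hΦHapp : ∀ h : ↥H, ΦH h = E.Phi (↑h : E.carrier × E'.carrier).1 := fun h => rfl
    set J : LieSubalgebra F (Module.End F L) := LieSubalgebra.map ΦH ⊤ with hJ
    have hJP : IsPSubalgebra F (· ^ p) J := by
      intro D0 hD0
      obtain ⟨h, -, rfl⟩ := (LieSubalgebra.mem_map _ _ _).mp hD0
      refine (LieSubalgebra.mem_map _ _ _).mpr
        ⟨⟨q ↑h, pSpan_isP _ _ _ h.2⟩, LieSubalgebra.mem_top _, ?_⟩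
      show E.Phi (E.pm (↑h : E.carrier × E'.carrier).1)
        = (fun f => f ^ p) (E.Phi (↑h : E.carrier × E'.carrier).1)
      rw [E.Phi_pm]
    have hJR : Set.range ⇑(LieAlgebra.ad F L) ⊆ J := by
      rintro _ ⟨a, rfl⟩
      refine (LieSubalgebra.mem_map _ _ _).mpr
        ⟨⟨Δ a, hRH (Δ.mem_range_self a)⟩, LieSubalgebra.mem_top _, ?_⟩
      show E.Phi (E.incl a) = LieAlgebra.ad F L a
      exact E.Phi_incl a
    have hAJ : pAlg p F L ≤ J := pSpan_le hJP hJR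
    obtain ⟨h, -, hh⟩ := (LieSubalgebra.mem_map _ _ _).mp (hAJ hD)
    exact ⟨⟨↑h, h.2⟩, hh⟩
  -- complement of ad L inside A
  set Asub : Submodule F (Module.End F L) := (pAlg p F L).toSubmodule with hAsub
  set adl : L →ₗ[F] Module.End F L := (LieAlgebra.ad F L).toLinearMap with hadl
  set adLsub : Submodule F (Module.End F L) := LinearMap.range adl with hadLsub
  have hadA : adLsub ≤ Asub := by
    rintro _ ⟨a, rfl⟩
    exact subset_pSpan _ _ ⟨a, rfl⟩
  obtain ⟨q0, hq0⟩ := Submodule.exists_isCompl (Submodule.comap Asub.subtype adLsub)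
  set B : Submodule F (Module.End F L) := q0.map Asub.subtype with hB
  have hBA : B ≤ Asub := Submodule.map_subtype_le _ _
  have hdisj : adLsub ⊓ B = ⊥ := by
    apply le_bot_iff.mp
    rintro D0 ⟨hD1, hD2⟩
    obtain ⟨⟨D', hD'⟩, hq', rfl⟩ := hD2
    have : (⟨D', hD'⟩ : ↥Asub) ∈ Submodule.comap Asub.subtype adLsub ⊓ q0 := ⟨hD1, hq'⟩
    rw [hq0.inf_eq_bot] at this
    simp only [Submodule.mem_bot] at this
    rw [this]
    rfl
  have hsup : adLsub ⊔ B = Asub := by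
    have h1 : (Submodule.comap Asub.subtype adLsub) ⊔ q0 = ⊤ := hq0.sup_eq_top
    have h2 := congrArg (Submodule.map Asub.subtype) h1
    rw [Submodule.map_sup, Submodule.map_comap_subtype, inf_of_le_right hadA,
      Submodule.map_subtype_top] at h2
    exact h2
  -- a section of ρ over B
  obtain ⟨σ, hσ⟩ : ∃ σ : ↥B →ₗ[F] ↥Hsub, ∀ b : ↥B, ρ (σ b) = (b : Module.End F L) := by
    have hBR : B ≤ LinearMap.range ρ := le_trans (hBA.trans_eq rfl) (hAsub ▸ hArho)
    obtain ⟨s, hs⟩ := Module.projective_lifting_property ρ.rangeRestrict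
      (Submodule.inclusion hBR) (LinearMap.surjective_rangeRestrict ρ)
    refine ⟨s, fun b => ?_⟩
    have := congrArg (fun f => (f b : Module.End F L)) hs
    simpa using this
  set σP : ↥B →ₗ[F] E.carrier × E'.carrier := Hsub.subtype ∘ₗ σ with hσP
  have hσmemH : ∀ b : ↥B, σP b ∈ H := fun b => (σ b).2
  have hσΦ1 : ∀ b : ↥B, E.Phi (σP b).1 = (b : Module.End F L) := fun b => hσ b
  have hσΦ2 : ∀ b : ↥B, E'.Phi (σP b).2 = (b : Module.End F L) := fun b => by
    rw [← hHD _ (hσmemH b)]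
    exact hσΦ1 b
  -- the subalgebra G2
  set G2sub : Submodule F (E.carrier × E'.carrier) := RΔ.toSubmodule ⊔ LinearMap.range σP
    with hG2sub
  have hG2H : G2sub ≤ Hsub := by
    apply sup_le
    · intro m hm
      exact hRH hm
    · rintro _ ⟨b, rfl⟩
      exact hσmemH b
  let G2 : LieSubalgebra F (E.carrier × E'.carrier) :=
    { G2sub with
      lie_mem' := fun {x y} hx hy =>
        Submodule.mem_sup_left (hHbr x (hG2H hx) y (hG2H hy)) }
  -- decomposition of elements of G2
  have hdecomp : ∀ m ∈ G2sub, ∃ (a : L) (b : ↥B), m = Δ a + σP b := by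
    intro m hm
    rw [hG2sub, Submodule.mem_sup] at hm
    obtain ⟨y, hy, z, hz, rfl⟩ := hm
    obtain ⟨a, rfl⟩ := (Δ.mem_range y).mp hy
    obtain ⟨b, rfl⟩ := hz
    exact ⟨a, b, rfl⟩
  -- injectivity of both projections on G2
  have hval : ∀ (a : L) (b : ↥B), E.Phi ((Δ a + σP b).1) = adl a + ↑b := by
    intro a b
    show E.Phi (E.incl a + (σP b).1) = _
    rw [map_add, E.Phi_incl, hσΦ1]
    rfl
  have hval' : ∀ (a : L) (b : ↥B), E'.Phi ((Δ a + σP b).2) = adl a + ↑b := by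
    intro a b
    show E'.Phi (E'.incl a + (σP b).2) = _
    rw [map_add, E'.Phi_incl, hσΦ2]
    rfl
  have hzero : ∀ (a : L) (b : ↥B), adl a + ↑b = 0 → b = 0 := by
    intro a b h
    have h1 : (↑b : Module.End F L) ∈ adLsub ⊓ B := by
      constructor
      · exact ⟨-a, by rw [map_neg]; exact eq_neg_of_add_eq_zero_right h ▸ rfl⟩
      · exact b.2
    rw [hdisj, Submodule.mem_bot] at h1
    exact Subtype.ext h1
  have hinj1 : ∀ m ∈ G2sub, m.1 = 0 → m = 0 := by
    intro m hm h1
    obtain ⟨a, b, rfl⟩ := hdecomp m hm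
    have h2 : E.Phi ((Δ a + σP b).1) = 0 := by rw [h1]; exact map_zero _
    rw [hval] at h2
    have hb0 : b = 0 := hzero a b h2
    rw [hb0, map_zero, add_zero] at h1 ⊢
    have ha0 : E.incl a = 0 := h1
    have : a = 0 := E.injective (by rw [ha0]; exact (map_zero _).symm)
    rw [this, map_zero]
  have hinj2 : ∀ m ∈ G2sub, m.2 = 0 → m = 0 := by
    intro m hm h1
    obtain ⟨a, b, rfl⟩ := hdecomp m hm
    have h2 : E'.Phi ((Δ a + σP b).2) = 0 := by rw [h1]; exact map_zero _
    rw [hval'] at h2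
    have hb0 : b = 0 := hzero a b h2
    rw [hb0, map_zero, add_zero] at h1 ⊢
    have ha0 : E'.incl a = 0 := h1
    have : a = 0 := E'.injective (by rw [ha0]; exact (map_zero _).symm)
    rw [this, map_zero]
  -- dimension of G2
  have hRΔinj : Function.Injective Δ.toLinearMap := by
    intro a b h
    have := congrArg Prod.fst h
    exact E.injective this
  have hσPinj : Function.Injective σP := by
    intro b1 b2 h
    have := congrArg (fun m : E.carrier × E'.carrier => E.Phi m.1) h
    rw [hσΦ1, hσΦ1] at this
    exact Subtype.ext this
  have hRΔsub : RΔ.toSubmodule = LinearMap.range Δ.toLinearMap := by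
    ext m
    constructor
    · intro hm
      obtain ⟨a, ha⟩ := (Δ.mem_range m).mp hm
      exact ⟨a, ha⟩
    · rintro ⟨a, rfl⟩
      exact Δ.mem_range_self a
  have hinfG2 : RΔ.toSubmodule ⊓ LinearMap.range σP = ⊥ := by
    apply le_bot_iff.mp
    rintro m ⟨hm1, hm2⟩
    obtain ⟨a, rfl⟩ := (Δ.mem_range m).mp hm1
    obtain ⟨b, hb⟩ := hm2
    have h1 : E.Phi (Δ a).1 = adl a := E.Phi_incl a
    have h2 : E.Phi (Δ a).1 = ↑b := by rw [← hb]; exact hσΦ1 b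
    have h3 : (↑b : Module.End F L) ∈ adLsub ⊓ B := ⟨⟨a, h2 ▸ h1 ▸ rfl⟩, b.2⟩
    rw [hdisj, Submodule.mem_bot] at h3
    have hb0 : b = 0 := Subtype.ext h3
    rw [hb0, map_zero] at hb
    rw [← hb]
    exact Submodule.zero_mem ⊥
  haveI : FiniteDimensional F (E.carrier × E'.carrier) := by infer_instance
  have hd1 : Module.finrank F ↥G2sub + 0
      = Module.finrank F ↥RΔ.toSubmodule + Module.finrank F ↥(LinearMap.range σP) := by
    have := Submodule.finrank_sup_add_finrank_inf_eq RΔ.toSubmodule (LinearMap.range σP)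
    rw [hinfG2] at this
    rw [← this, finrank_bot]
  have hd2 : Module.finrank F ↥RΔ.toSubmodule = Module.finrank F L := by
    rw [hRΔsub]
    exact LinearMap.finrank_range_of_inj hRΔinj
  have hd3 : Module.finrank F ↥(LinearMap.range σP) = Module.finrank F ↥B :=
    LinearMap.finrank_range_of_inj hσPinj
  have hd4 : Module.finrank F ↥Asub + 0
      = Module.finrank F ↥adLsub + Module.finrank F ↥B := by
    have := Submodule.finrank_sup_add_finrank_inf_eq adLsub B
    rw [hdisj, hsup] at this
    rw [← this, finrank_bot]
  have hd5 : Module.finrank F ↥adLsub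
      + Module.finrank F ↥(LinearMap.ker adl) = Module.finrank F L :=
    LinearMap.finrank_range_add_finrank_ker adl
  have hdE := E.minimal_finrank hE
  have hdE' := E'.minimal_finrank hE'
  rw [← hAsub, ← hadl] at hdE hdE'
  have hdG2 : Module.finrank F ↥G2sub = Module.finrank F E.carrier := by omega
  have hdG2' : Module.finrank F ↥G2sub = Module.finrank F E'.carrier := by omega
  -- the two Lie homs
  haveI hFDG2 : FiniteDimensional F ↥G2 :=
    FiniteDimensional.of_injective (PEnvelope.subEquiv G2).toLinearMap
      (PEnvelope.subEquiv G2).injective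
  have hfinG2 : Module.finrank F ↥G2 = Module.finrank F ↥G2sub :=
    LinearEquiv.finrank_eq (PEnvelope.subEquiv G2)
  set φ1 : ↥G2 →ₗ⁅F⁆ E.carrier := (lieFst (F := F)).comp G2.incl with hφ1
  set φ2 : ↥G2 →ₗ⁅F⁆ E'.carrier := (lieSnd (F := F)).comp G2.incl with hφ2
  have hφ1app : ∀ x : ↥G2, φ1 x = (↑x : E.carrier × E'.carrier).1 := fun x => rfl
  have hφ2app : ∀ x : ↥G2, φ2 x = (↑x : E.carrier × E'.carrier).2 := fun x => rfl
  have hφ1inj : Function.Injective φ1 := by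
    intro x y h
    rw [hφ1app, hφ1app] at h
    have h2 : ((↑(x - y) : E.carrier × E'.carrier)).1 = 0 := by
      have : (↑(x - y) : E.carrier × E'.carrier) = ↑x - ↑y := rfl
      rw [this]
      show (↑x : E.carrier × E'.carrier).1 - (↑y : E.carrier × E'.carrier).1 = 0
      rw [h, sub_self]
    have h3 : (↑(x - y) : E.carrier × E'.carrier) = 0 := hinj1 _ (x - y).2 h2
    have h4 : x - y = 0 := Subtype.ext h3
    rwa [sub_eq_zero] at h4
  have hφ2inj : Function.Injective φ2 := by
    intro x y h
    rw [hφ2app, hφ2app] at h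
    have h2 : ((↑(x - y) : E.carrier × E'.carrier)).2 = 0 := by
      have : (↑(x - y) : E.carrier × E'.carrier) = ↑x - ↑y := rfl
      rw [this]
      show (↑x : E.carrier × E'.carrier).2 - (↑y : E.carrier × E'.carrier).2 = 0
      rw [h, sub_self]
    have h3 : (↑(x - y) : E.carrier × E'.carrier) = 0 := hinj2 _ (x - y).2 h2
    have h4 : x - y = 0 := Subtype.ext h3
    rwa [sub_eq_zero] at h4
  have hφ1surj : Function.Surjective φ1 := by
    have := (LinearMap.injective_iff_surjective_of_finrank_eq_finrank
      (f := φ1.toLinearMap) (by rw [hfinG2]; exact hdG2)).mp hφ1inj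
    exact this
  have hφ2surj : Function.Surjective φ2 := by
    have := (LinearMap.injective_iff_surjective_of_finrank_eq_finrank
      (f := φ2.toLinearMap) (by rw [hfinG2]; exact hdG2')).mp hφ2inj
    exact this
  exact ⟨((LieEquiv.ofBijective φ1 ⟨hφ1inj, hφ1surj⟩).symm.trans
    (LieEquiv.ofBijective φ2 ⟨hφ2inj, hφ2surj⟩))⟩

end Main

/-- Any two minimal `p`-envelopes of a finite-dimensional Lie algebra are
isomorphic as ordinary Lie algebras. -/
theorem minimal_pEnvelopes_isomorphic (p : ℕ) [Fact p.Prime]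
    (F : Type u) [Field F] [CharP F p]
    (L : Type u) [LieRing L] [LieAlgebra F L] [FiniteDimensional F L]
    (E E' : PEnvelope p F L) (hE : E.IsMinimal) (hE' : E'.IsMinimal) :
    Nonempty (E.carrier ≃ₗ⁅F⁆ E'.carrier) := by
  exact main_iso E E' hE hE'
end
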